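/- arXiv:2506.04618 — 4 statements merged into one kernel-verified Lean document; each statement's English description precedes it below -/
import Mathlib

section
/- Let β > 0. Let f = h + conj(g) be a harmonic K-quasiregular mapping on the unit disk 𝔻 (so h, g are holomorphic on 𝔻 and |g'(z)| ≤ k·|h'(z)| on 𝔻 for some k ∈ [0,1)), and write u = Re f, v = Im f. If there is a constant C > 0 such that sup_{|z|=r} |u(z)| ≤ C·(1-r)^{-β} for all r ∈ [0,1), then there is a constant C' > 0 such that sup_{|z|=r} |v(z)| ≤ C'·(1-r)^{-β} for all r ∈ [0,1). -/
open Complex Metric Set intervalIntegral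

lemma conj_intervalIntegral (f : ℝ → ℂ) (a b : ℝ) :
    (starRingEnd ℂ) (∫ t in a..b, f t) = ∫ t in a..b, (starRingEnd ℂ) (f t) := by
  rw [intervalIntegral, intervalIntegral, map_sub, integral_conj, integral_conj]

lemma keyA {f : ℂ → ℂ} {c : ℂ} {ρ A : ℝ} (hρ : 0 < ρ)
    (hf : DiffContOnCl ℂ f (ball c ρ))
    (hA : ∀ z ∈ sphere c ρ, |(f z).re| ≤ A) :
    ‖deriv f c‖ ≤ 2 * A / ρ := by
  have hρ' : (ρ:ℂ) ≠ 0 := by exact_mod_cast hρ.ne'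
  have hderiv : deriv f c = (2 * Real.pi * I : ℂ)⁻¹ • ∮ z in C(c, ρ), (z - c) ^ (-2:ℤ) • f z := by
    have h := hf.deriv_eq_smul_circleIntegral hρ
    have e : (∮ z in C(c, ρ), (z - c) ^ (-2:ℤ) • f z) = ∮ z in C(c, ρ), (1 / (z - c) ^ 2) • f z := by
      simp only [zpow_neg, one_div, zpow_ofNat]
    rw [e, h, smul_smul, inv_mul_cancel₀ (by simp [Real.pi_ne_zero, Complex.I_ne_zero]), one_smul]
  set I1 : ℂ := ∫ θ in (0:ℝ)..2*Real.pi, Complex.exp (-(θ:ℂ)*I) * f (circleMap c ρ θ) with hI1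
  have eq1 : (∮ z in C(c, ρ), (z - c) ^ (-2:ℤ) • f z) = (I/ρ) * I1 := by
    rw [circleIntegral, hI1, ← intervalIntegral.integral_const_mul]
    refine intervalIntegral.integral_congr fun θ _ => ?_
    have hE : Complex.exp ((θ:ℂ)*I) ≠ 0 := Complex.exp_ne_zero _
    simp only [deriv_circleMap, circleMap_sub_center, circleMap_zero, smul_eq_mul, zpow_neg,
      zpow_two, neg_mul, Complex.exp_neg]
    field_simp
  -- Cauchy-Goursat : circle integral of f is 0
  have hzero : (∮ z in C(c, ρ), f z) = 0 := by
    refine Complex.circleIntegral_eq_zero_of_differentiable_on_off_countable hρ.le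
      countable_empty ?_ fun z hz => hf.differentiableAt isOpen_ball hz.1
    rw [← closure_ball c hρ.ne']; exact hf.continuousOn
  have hI2 : (∫ θ in (0:ℝ)..2*Real.pi, Complex.exp ((θ:ℂ)*I) * f (circleMap c ρ θ)) = 0 := by
    have : (∮ z in C(c, ρ), f z)
        = (ρ * I) * ∫ θ in (0:ℝ)..2*Real.pi, Complex.exp ((θ:ℂ)*I) * f (circleMap c ρ θ) := by
      rw [circleIntegral, ← intervalIntegral.integral_const_mul]
      refine intervalIntegral.integral_congr fun θ _ => ?_
      simp only [deriv_circleMap, circleMap_zero, smul_eq_mul]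
      ring
    rw [hzero] at this
    have := this.symm
    rcases mul_eq_zero.mp this with h | h
    · exact absurd h (by simp [hρ', Complex.I_ne_zero])
    · exact h
  have hconj : (∫ θ in (0:ℝ)..2*Real.pi, Complex.exp (-(θ:ℂ)*I) * (starRingEnd ℂ) (f (circleMap c ρ θ))) = 0 := by
    have := congrArg (starRingEnd ℂ) hI2
    rw [conj_intervalIntegral, map_zero] at this
    rw [← this]
    refine intervalIntegral.integral_congr fun θ _ => ?_
    rw [map_mul, ← Complex.exp_conj]
    congr 2
    simp [Complex.ext_iff]
  have hI1re : I1 = ∫ θ in (0:ℝ)..2*Real.pi,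
      Complex.exp (-(θ:ℂ)*I) * (2 * ((f (circleMap c ρ θ)).re : ℂ)) := by
    rw [hI1, ← add_zero (∫ θ in (0:ℝ)..2*Real.pi, Complex.exp (-(θ:ℂ)*I) * f (circleMap c ρ θ)),
      ← hconj, ← intervalIntegral.integral_add]
    · refine intervalIntegral.integral_congr fun θ _ => ?_
      rw [← mul_add, Complex.add_conj]
      norm_num
    · have h1 : ContinuousOn f (closedBall c ρ) := by
        rw [← closure_ball c hρ.ne']; exact hf.continuousOn
      have hcont : Continuous fun θ : ℝ => f (circleMap c ρ θ) :=
        h1.comp_continuous (continuous_circleMap _ _) fun θ => circleMap_mem_closedBall c hρ.le θ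
      have hexp : Continuous fun θ : ℝ => Complex.exp (-(θ:ℂ)*I) := by continuity
      exact (hexp.mul hcont).intervalIntegrable _ _
    · have h1 : ContinuousOn f (closedBall c ρ) := by
        rw [← closure_ball c hρ.ne']; exact hf.continuousOn
      have hcont : Continuous fun θ : ℝ => f (circleMap c ρ θ) :=
        h1.comp_continuous (continuous_circleMap _ _) fun θ => circleMap_mem_closedBall c hρ.le θ
      have hexp : Continuous fun θ : ℝ => Complex.exp (-(θ:ℂ)*I) := by continuity
      have hc2 : Continuous fun θ : ℝ => (starRingEnd ℂ) (f (circleMap c ρ θ)) := by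
        exact Complex.continuous_conj.comp hcont
      exact (hexp.mul hc2).intervalIntegrable _ _
  have hbound : ‖I1‖ ≤ 2 * A * (2 * Real.pi) := by
    rw [hI1re]
    have := intervalIntegral.norm_integral_le_of_norm_le_const
      (C := 2 * A) (f := fun θ : ℝ => Complex.exp (-(θ:ℂ)*I) * (2 * ((f (circleMap c ρ θ)).re : ℂ)))
      (a := 0) (b := 2*Real.pi) ?_
    · calc ‖∫ θ in (0:ℝ)..2*Real.pi, Complex.exp (-(θ:ℂ)*I) * (2 * ((f (circleMap c ρ θ)).re : ℂ))‖
          ≤ 2 * A * |2*Real.pi - 0| := this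
        _ = 2 * A * (2 * Real.pi) := by rw [sub_zero, abs_of_pos (by positivity)]
    · intro θ _
      have h1 : ‖Complex.exp (-(θ:ℂ)*I)‖ = 1 := by
        rw [Complex.norm_exp]; norm_num
      rw [norm_mul, h1, one_mul, norm_mul]
      have := hA _ (circleMap_mem_sphere c hρ.le θ)
      calc ‖(2:ℂ)‖ * ‖((f (circleMap c ρ θ)).re : ℂ)‖ = 2 * |(f (circleMap c ρ θ)).re| := by
            simp [Complex.norm_real]
        _ ≤ 2 * A := by linarith
  rw [hderiv, eq1]
  rw [smul_eq_mul]
  rw [norm_mul, norm_mul, norm_inv, norm_div]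
  simp only [Complex.norm_I, Complex.norm_real, Complex.norm_two, norm_mul, Real.norm_eq_abs]
  rw [abs_of_pos Real.pi_pos, abs_of_pos hρ]
  calc (2 * Real.pi * 1)⁻¹ * (1 / ρ * ‖I1‖) ≤ (2 * Real.pi * 1)⁻¹ * (1/ρ * (2 * A * (2*Real.pi))) := by
        apply mul_le_mul_of_nonneg_left
        · apply mul_le_mul_of_nonneg_left hbound (by positivity)
        · positivity
    _ = 2 * A / ρ := by field_simp

lemma keyB {β C : ℝ} (hβ : 0 < β) (hC : 0 < C) {F : ℂ → ℂ}
    (hF : DifferentiableOn ℂ F (ball 0 1))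
    (hRe : ∀ z ∈ ball (0:ℂ) 1, |(F z).re| ≤ C * (1 - ‖z‖) ^ (-β)) :
    ∀ w ∈ ball (0:ℂ) 1,
      ‖deriv F w‖ ≤ 4 * C * 2 ^ β * (1 - ‖w‖) ^ (-β - 1) := by
  intro w hw
  set r : ℝ := ‖w‖ with hr
  have hr0 : 0 ≤ r := norm_nonneg w
  have hr1 : r < 1 := by simpa [hr] using mem_ball_zero_iff.mp hw
  set ρ : ℝ := (1 - r) / 2 with hρdef
  have hρ : 0 < ρ := by simp only [hρdef]; linarith
  have hsub : closedBall w ρ ⊆ ball (0:ℂ) 1 := by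
    intro ζ hζ
    rw [mem_closedBall] at hζ
    rw [mem_ball_zero_iff]
    calc ‖ζ‖ = ‖w + (ζ - w)‖ := by ring_nf
      _ ≤ ‖w‖ + ‖ζ - w‖ := norm_add_le _ _
      _ ≤ r + ρ := by
          refine add_le_add (le_of_eq rfl) ?_
          simpa [dist_eq_norm] using hζ
      _ < 1 := by simp only [hρdef]; linarith
  have hdc : DiffContOnCl ℂ F (ball w ρ) := by
    refine DifferentiableOn.diffContOnCl ?_
    rw [closure_ball w hρ.ne']
    exact hF.mono hsub
  have hAbound : ∀ z ∈ sphere w ρ, |(F z).re| ≤ C * ρ ^ (-β) := by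
    intro z hz
    have hzball : z ∈ ball (0:ℂ) 1 := hsub (sphere_subset_closedBall hz)
    have h1 : ρ ≤ 1 - ‖z‖ := by
      have : ‖z‖ ≤ r + ρ := by
        calc ‖z‖ = ‖w + (z - w)‖ := by rw [show w + (z-w) = z by ring]
          _ ≤ ‖w‖ + ‖z - w‖ := norm_add_le _ _
          _ ≤ r + ρ := add_le_add (le_of_eq rfl) (le_of_eq (by simpa [dist_eq_norm] using hz))
      simp only [hρdef] at this ⊢; linarith
    calc |(F z).re| ≤ C * (1 - ‖z‖) ^ (-β) := hRe z hzball
      _ ≤ C * ρ ^ (-β) := by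
          refine mul_le_mul_of_nonneg_left ?_ hC.le
          exact Real.rpow_le_rpow_of_nonpos hρ h1 (by linarith)
  have key := keyA hρ hdc hAbound
  calc ‖deriv F w‖ ≤ 2 * (C * ρ ^ (-β)) / ρ := key
    _ = 4 * C * 2 ^ β * (1 - r) ^ (-β - 1) := by
        have h1r : (0:ℝ) < 1 - r := by linarith
        rw [hρdef]
        rw [Real.div_rpow (by linarith) (by norm_num)]
        rw [Real.rpow_neg (by norm_num : (0:ℝ) ≤ 2)]
        rw [show -β - 1 = -β + (-1) by ring, Real.rpow_add h1r, Real.rpow_neg_one]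
        have h2 : (0:ℝ) < 2 ^ β := Real.rpow_pos_of_pos (by norm_num) _
        have h3 : (0:ℝ) < (1-r) ^ (-β) := Real.rpow_pos_of_pos h1r _
        field_simp
        ring

set_option maxHeartbeats 1000000 in
theorem stmt1 (β : ℝ) (hβ : 0 < β)
    (h g : ℂ → ℂ) (k : ℝ) (hk0 : 0 ≤ k) (hk1 : k < 1)
    (hh : DifferentiableOn ℂ h (ball (0:ℂ) 1))
    (hg : DifferentiableOn ℂ g (ball (0:ℂ) 1))
    (hqr : ∀ z ∈ ball (0:ℂ) 1, ‖deriv g z‖ ≤ k * ‖deriv h z‖)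
    (C : ℝ) (hC : 0 < C)
    (hu : ∀ r ∈ Ico (0:ℝ) 1, ∀ z : ℂ, ‖z‖ = r →
      |(h z + (starRingEnd ℂ) (g z)).re| ≤ C * (1 - r) ^ (-β)) :
    ∃ C' > 0, ∀ r ∈ Ico (0:ℝ) 1, ∀ z : ℂ, ‖z‖ = r →
      |(h z + (starRingEnd ℂ) (g z)).im| ≤ C' * (1 - r) ^ (-β) := by
  set F : ℂ → ℂ := fun z => h z + g z with hFdef
  set G : ℂ → ℂ := fun z => h z - g z with hGdef
  have hF : DifferentiableOn ℂ F (ball 0 1) := hh.add hg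
  have hG : DifferentiableOn ℂ G (ball 0 1) := hh.sub hg
  have hRe : ∀ z ∈ ball (0:ℂ) 1, |(F z).re| ≤ C * (1 - ‖z‖) ^ (-β) := by
    intro z hz
    have hz1 : ‖z‖ < 1 := mem_ball_zero_iff.mp hz
    have := hu (‖z‖) ⟨norm_nonneg z, hz1⟩ z rfl
    simpa [hFdef, Complex.add_re, Complex.conj_re] using this
  have hF' := keyB hβ hC hF hRe
  set M : ℝ := (1 + k) / (1 - k) * (4 * C * 2 ^ β) with hMdef
  have hM : 0 < M := by
    apply mul_pos
    · apply div_pos (by linarith) (by linarith)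
    · positivity
  -- derivative bound for G
  have hG' : ∀ w ∈ ball (0:ℂ) 1,
      ‖deriv G w‖ ≤ M * (1 - ‖w‖) ^ (-β - 1) := by
    intro w hw
    have hhd : DifferentiableAt ℂ h w := hh.differentiableAt (isOpen_ball.mem_nhds hw)
    have hgd : DifferentiableAt ℂ g w := hg.differentiableAt (isOpen_ball.mem_nhds hw)
    have hdF : deriv F w = deriv h w + deriv g w := deriv_fun_add hhd hgd
    have hdG : deriv G w = deriv h w - deriv g w := deriv_fun_sub hhd hgd
    set a := ‖deriv h w‖
    set b := ‖deriv g w‖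
    have hba : b ≤ k * a := hqr w hw
    have h1 : ‖deriv G w‖ ≤ (1 + k) * a := by
      rw [hdG]
      calc ‖deriv h w - deriv g w‖ ≤ a + b := norm_sub_le _ _
        _ ≤ (1 + k) * a := by nlinarith [norm_nonneg (deriv h w)]
    have h2 : (1 - k) * a ≤ ‖deriv F w‖ := by
      have : a ≤ ‖deriv F w‖ + b := by
        calc a = ‖(deriv h w + deriv g w) - deriv g w‖ := by rw [add_sub_cancel_right]
          _ ≤ ‖deriv h w + deriv g w‖ + b := norm_sub_le _ _
          _ = ‖deriv F w‖ + b := by rw [hdF]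
      nlinarith
    have h3 : ‖deriv G w‖ ≤ (1 + k)/(1 - k) * ‖deriv F w‖ := by
      rw [div_mul_eq_mul_div, le_div_iff₀ (by linarith)]
      calc ‖deriv G w‖ * (1 - k) ≤ (1 + k) * a * (1 - k) := by
            nlinarith [norm_nonneg (deriv G w)]
        _ = (1 + k) * ((1 - k) * a) := by ring
        _ ≤ (1 + k) * ‖deriv F w‖ := by nlinarith
    calc ‖deriv G w‖ ≤ (1 + k)/(1 - k) * ‖deriv F w‖ := h3
      _ ≤ (1 + k)/(1 - k) * (4 * C * 2 ^ β * (1 - ‖w‖) ^ (-β - 1)) := by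
          apply mul_le_mul_of_nonneg_left (hF' w hw)
          exact div_nonneg (by linarith) (by linarith)
      _ = M * (1 - ‖w‖) ^ (-β - 1) := by rw [hMdef]; ring
  refine ⟨‖G 0‖ + M / β + 1, by positivity, ?_⟩
  intro r hr z hz
  have hr0 : 0 ≤ r := hr.1
  have hr1 : r < 1 := hr.2
  have h1r : (0:ℝ) < 1 - r := by linarith
  have hzball : z ∈ ball (0:ℂ) 1 := mem_ball_zero_iff.mpr (by rw [hz]; exact hr1)
  -- FTC along the segment from 0 to z
  have hcderiv : ContinuousOn (deriv G) (ball (0:ℂ) 1) :=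
    ((hG.analyticOnNhd isOpen_ball).deriv).continuousOn
  have hmem : ∀ t ∈ uIcc (0:ℝ) 1, t • z ∈ ball (0:ℂ) 1 := by
    intro t ht
    rw [uIcc_of_le (by norm_num : (0:ℝ) ≤ 1)] at ht
    rw [mem_ball_zero_iff, norm_smul, Real.norm_eq_abs, _root_.abs_of_nonneg ht.1,
      hz]
    nlinarith [ht.2]
  have hsmul : Continuous fun t : ℝ => t • z := by continuity
  have hFTC : G z - G 0 = ∫ t in (0:ℝ)..1, z • deriv G (t • z) := by
    have hder : ∀ t ∈ uIcc (0:ℝ) 1, HasDerivAt (fun s : ℝ => G (s • z)) (z • deriv G (t • z)) t := by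
      intro t ht
      have hGat : HasDerivAt G (deriv G (t • z)) (t • z) :=
        (hG.differentiableAt (isOpen_ball.mem_nhds (hmem t ht))).hasDerivAt
      have hin : HasDerivAt (fun s : ℝ => s • z) z t := by
        simpa using (hasDerivAt_id t).smul_const z
      have := HasDerivAt.scomp t hGat hin
      simpa [smul_smul, mul_comm, Function.comp_def] using this
    have hint : IntervalIntegrable (fun t : ℝ => z • deriv G (t • z)) MeasureTheory.volume 0 1 := by
      apply ContinuousOn.intervalIntegrable
      exact ((continuousOn_const (c := z)).smul ((hcderiv.comp hsmul.continuousOn) hmem)).congr fun _ _ => rfl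
    have := intervalIntegral.integral_eq_sub_of_hasDerivAt hder hint
    rw [this]
    norm_num
  -- bound the integral
  have hptwise : ∀ t ∈ Icc (0:ℝ) 1,
      ‖z • deriv G (t • z)‖ ≤ M * (r * (1 - t * r) ^ (-β - 1)) := by
    intro t ht
    have htz : ‖t • z‖ = t * r := by
      rw [norm_smul, Real.norm_eq_abs, _root_.abs_of_nonneg ht.1,
        hz]
    have htzmem : t • z ∈ ball (0:ℂ) 1 := hmem t (by rw [uIcc_of_le (by norm_num : (0:ℝ) ≤ 1)]; exact ht)
    have := hG' (t • z) htzmem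
    rw [htz] at this
    rw [norm_smul, hz]
    calc r * ‖deriv G (t • z)‖ ≤ r * (M * (1 - t * r) ^ (-β - 1)) :=
          mul_le_mul_of_nonneg_left this hr0
      _ = M * (r * (1 - t * r) ^ (-β - 1)) := by ring
  have hbnd_cont : ContinuousOn (fun t : ℝ => M * (r * (1 - t * r) ^ (-β - 1))) (uIcc (0:ℝ) 1) := by
    apply ContinuousOn.mul continuousOn_const
    apply ContinuousOn.mul continuousOn_const
    apply ContinuousOn.rpow_const
    · fun_prop
    · intro t ht
      rw [uIcc_of_le (by norm_num : (0:ℝ) ≤ 1)] at ht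
      left
      nlinarith [ht.1, ht.2]
  have hintval : (∫ t in (0:ℝ)..1, M * (r * (1 - t * r) ^ (-β - 1)))
      = M / β * ((1 - r) ^ (-β) - 1) := by
    have hanti : ∀ t ∈ uIcc (0:ℝ) 1,
        HasDerivAt (fun s : ℝ => M / β * (1 - s * r) ^ (-β)) (M * (r * (1 - t * r) ^ (-β - 1))) t := by
      intro t ht
      rw [uIcc_of_le (by norm_num : (0:ℝ) ≤ 1)] at ht
      have hpos : (0:ℝ) < 1 - t * r := by nlinarith [ht.1, ht.2]
      have hin : HasDerivAt (fun s : ℝ => 1 - s * r) (-r) t := by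
        simpa using ((hasDerivAt_id t).mul_const r).const_sub 1
      have hout := Real.hasDerivAt_rpow_const (x := 1 - t * r) (p := -β) (Or.inl hpos.ne')
      have hcomp := (hout.comp t hin).const_mul (M / β)
      refine hcomp.congr_deriv ?_
      rw [div_mul_eq_mul_div, div_eq_iff hβ.ne']
      ring
    rw [intervalIntegral.integral_eq_sub_of_hasDerivAt hanti (hbnd_cont.intervalIntegrable)]
    norm_num
    ring
  have hone : (1:ℝ) ≤ (1 - r) ^ (-β) :=
    Real.one_le_rpow_of_pos_of_le_one_of_nonpos h1r (by linarith) (by linarith)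
  have hnormint : ‖G z - G 0‖ ≤ M / β * ((1 - r) ^ (-β) - 1) := by
    rw [hFTC]
    have h1 := intervalIntegral.norm_integral_le_of_norm_le
      (f := fun t : ℝ => z • deriv G (t • z))
      (g := fun t : ℝ => M * (r * (1 - t * r) ^ (-β - 1))) (a := 0) (b := 1)
      (μ := MeasureTheory.volume) (by norm_num)
      (MeasureTheory.ae_of_all _
        (fun t ht => by
          exact hptwise t ⟨ht.1.le, ht.2⟩))
      hbnd_cont.intervalIntegrable
    rw [hintval] at h1
    calc ‖∫ t in (0:ℝ)..1, z • deriv G (t • z)‖ ≤ |M / β * ((1 - r) ^ (-β) - 1)| := h1.trans (le_abs_self _)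
      _ = M / β * ((1 - r) ^ (-β) - 1) := by
          apply _root_.abs_of_nonneg
          have : (0:ℝ) ≤ M / β := by positivity
          nlinarith
  -- conclude
  have him : (h z + (starRingEnd ℂ) (g z)).im = (G z).im := by
    simp only [hGdef, Complex.add_im, Complex.sub_im, Complex.conj_im]
    ring
  rw [him]
  calc |(G z).im| ≤ ‖G z‖ := Complex.abs_im_le_norm _
    _ ≤ ‖G 0‖ + ‖G z - G 0‖ := by
        have := norm_sub_le (G z - G 0) (-(G 0))
        simpa [sub_neg_eq_add, sub_add_cancel] using (norm_add_le (G 0) (G z - G 0)).trans_eq' (by ring_nf)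
    _ ≤ ‖G 0‖ + M / β * ((1 - r) ^ (-β) - 1) := by
        have : ‖G z - G 0‖ ≤ M / β * ((1 - r) ^ (-β) - 1) := hnormint
        linarith
    _ ≤ (‖G 0‖ + M / β + 1) * (1 - r) ^ (-β) := by
        have hM0 : 0 ≤ M / β := by positivity
        have hG0 : 0 ≤ ‖G 0‖ := norm_nonneg _
        nlinarith [hone]
end

section
/- Let 0 < α < 1 and let φ : ℝ → ℝ satisfy |φ(s) - φ(t)| ≤ A·|s-t|^α for all s,t ∈ ℝ and some constant A > 0, and suppose φ is 2π-periodic. Then there is a constant C > 0 such that for all r ∈ [0,1) and all θ ∈ ℝ: |(1/π)·∫₀^{2π} e^{it}/(e^{it} - r·e^{iθ})² · φ(t) dt| ≤ C·(1-r)^{α-1}. -/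
open Complex Set
open intervalIntegral Real

lemma expI_cont : Continuous fun u : ℝ => Complex.exp (u * Complex.I) :=
  Complex.continuous_exp.comp (Complex.continuous_ofReal.mul continuous_const)

lemma expI_sub_ne (r : ℝ) (hr0 : 0 ≤ r) (hr1 : r < 1) (u : ℝ) :
    Complex.exp (u * Complex.I) - (r : ℂ) ≠ 0 := by
  intro h
  have h1 : ‖Complex.exp (u * Complex.I)‖ = 1 := Complex.norm_exp_ofReal_mul_I u
  have : Complex.exp (u * Complex.I) = (r : ℂ) := sub_eq_zero.mp h
  rw [this, Complex.norm_real, Real.norm_eq_abs, _root_.abs_of_nonneg hr0] at h1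
  linarith

lemma expI_deriv (u : ℝ) :
    HasDerivAt (fun u : ℝ => Complex.exp (u * Complex.I))
      (Complex.exp (u * Complex.I) * Complex.I) u := by
  have h1 : HasDerivAt (fun u : ℝ => (u : ℂ) * Complex.I) Complex.I u := by
    simpa using (Complex.ofRealCLM.hasDerivAt (x := u)).mul_const Complex.I
  exact (Complex.hasDerivAt_exp _).comp u h1

lemma kernel_cont (r : ℝ) (hr0 : 0 ≤ r) (hr1 : r < 1) :
    Continuous fun u : ℝ =>
      Complex.exp (u * Complex.I) / (Complex.exp (u * Complex.I) - (r : ℂ)) ^ 2 :=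
  expI_cont.div ((expI_cont.sub continuous_const).pow 2)
    (fun u => pow_ne_zero 2 (expI_sub_ne r hr0 hr1 u))

lemma kernel_int_zero (r : ℝ) (hr0 : 0 ≤ r) (hr1 : r < 1) :
    (∫ u in (-Real.pi)..Real.pi,
      Complex.exp (u * Complex.I) / (Complex.exp (u * Complex.I) - (r : ℂ)) ^ 2) = 0 := by
  have key : ∀ u : ℝ, HasDerivAt (fun u : ℝ => Complex.I / (Complex.exp (u * Complex.I) - (r : ℂ)))
      (Complex.exp (u * Complex.I) / (Complex.exp (u * Complex.I) - (r : ℂ)) ^ 2) u := by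
    intro u
    have h0 : HasDerivAt (fun u : ℝ => Complex.exp (u * Complex.I) - (r : ℂ))
        (Complex.exp (u * Complex.I) * Complex.I) u := (expI_deriv u).sub_const (r : ℂ)
    have h2 : HasDerivAt (fun u : ℝ => Complex.I / (Complex.exp (u * Complex.I) - (r : ℂ)))
        ((0 * (Complex.exp (u * Complex.I) - (r : ℂ)) -
          Complex.I * (Complex.exp (u * Complex.I) * Complex.I)) /
          (Complex.exp (u * Complex.I) - (r : ℂ)) ^ 2) u :=
      (hasDerivAt_const u Complex.I).div h0 (expI_sub_ne r hr0 hr1 u)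
    have heq : (0 * (Complex.exp (u * Complex.I) - (r : ℂ)) -
          Complex.I * (Complex.exp (u * Complex.I) * Complex.I)) /
          (Complex.exp (u * Complex.I) - (r : ℂ)) ^ 2
        = Complex.exp (u * Complex.I) / (Complex.exp (u * Complex.I) - (r : ℂ)) ^ 2 := by
      rw [show (0 * (Complex.exp (u * Complex.I) - (r : ℂ)) -
          Complex.I * (Complex.exp (u * Complex.I) * Complex.I))
          = -(Complex.I ^ 2) * Complex.exp (u * Complex.I) by ring, Complex.I_sq]
      ring_nf
    exact heq ▸ h2
  have hint : IntervalIntegrable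
      (fun u : ℝ => Complex.exp (u * Complex.I) / (Complex.exp (u * Complex.I) - (r : ℂ)) ^ 2)
      MeasureTheory.volume (-Real.pi) Real.pi :=
    (kernel_cont r hr0 hr1).intervalIntegrable _ _
  rw [integral_eq_sub_of_hasDerivAt (fun u _ => key u) hint]
  have : Complex.exp ((Real.pi : ℂ) * Complex.I) = Complex.exp (((-Real.pi : ℝ) : ℂ) * Complex.I) := by
    push_cast
    rw [Complex.exp_pi_mul_I, neg_mul, Complex.exp_neg, Complex.exp_pi_mul_I]
    norm_num
  rw [this, sub_self]
lemma jordan (u : ℝ) (hu : |u| ≤ Real.pi) :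
    2 * u ^ 2 / Real.pi ^ 2 ≤ 1 - Real.cos u := by
  have h1 : Real.sin (u / 2) ^ 2 = (1 - Real.cos u) / 2 := by
    rw [Real.sin_sq_eq_half_sub]
    ring_nf
  have h2 : |u| / Real.pi ≤ Real.sin (|u| / 2) := by
    have := Real.mul_le_sin (x := |u| / 2) (by positivity) (by linarith)
    calc |u| / Real.pi = 2 / Real.pi * (|u| / 2) := by
          field_simp
      _ ≤ Real.sin (|u| / 2) := this
  have h3 : Real.sin (|u| / 2) ^ 2 = Real.sin (u / 2) ^ 2 := by
    rcases abs_cases u with ⟨h, _⟩ | ⟨h, _⟩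
    · rw [h]
    · rw [h, show -u / 2 = -(u/2) by ring, Real.sin_neg]
      ring
  have h4 : (|u| / Real.pi) ^ 2 ≤ Real.sin (|u| / 2) ^ 2 := by
    apply pow_le_pow_left₀ (by positivity) h2
  rw [h3, h1] at h4
  have h5 : (|u| / Real.pi) ^ 2 = u ^ 2 / Real.pi ^ 2 := by
    rw [div_pow, _root_.sq_abs]
  rw [h5] at h4
  rw [show 2 * u ^ 2 / Real.pi ^ 2 = 2 * (u ^ 2 / Real.pi ^ 2) by ring]
  linarith

lemma denom_lb (r u : ℝ) (hr0 : 0 ≤ r) (hr1 : r < 1) (hu : |u| ≤ Real.pi) :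
    ((1 - r) ^ 2 + u ^ 2) / (8 * Real.pi ^ 2)
      ≤ ‖Complex.exp (u * Complex.I) - (r : ℂ)‖ ^ 2 := by
  have habs : ‖Complex.exp (u * Complex.I) - (r : ℂ)‖ ^ 2
      = (Real.cos u - r) ^ 2 + Real.sin u ^ 2 := by
    rw [Complex.sq_norm, Complex.normSq_apply]
    simp [Complex.exp_ofReal_mul_I_re, Complex.exp_ofReal_mul_I_im]
    ring
  rw [habs]
  have hj := jordan u hu
  have hpy := Real.sin_sq_add_cos_sq u
  have hpi : 3 < Real.pi := Real.pi_gt_three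
  have hu2 : u ^ 2 ≤ Real.pi ^ 2 := by
    have := _root_.sq_abs u ▸ pow_le_pow_left₀ (abs_nonneg u) hu 2
    linarith [this]
  have hexp : (Real.cos u - r) ^ 2 + Real.sin u ^ 2 = (1 - r) ^ 2 + 2 * r * (1 - Real.cos u) := by
    nlinarith [hpy]
  rw [hexp]
  rw [div_le_iff₀ (by positivity)]
  have hj' : 2 * u ^ 2 ≤ (1 - Real.cos u) * Real.pi ^ 2 := by
    rw [div_le_iff₀ (by positivity)] at hj
    linarith
  rcases le_or_gt (1/2 : ℝ) r with h | h
  · nlinarith [mul_le_mul_of_nonneg_left hj' (show (0:ℝ) ≤ 16 * r by linarith),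
      sq_nonneg u, sq_nonneg (1 - r), hpi,
      mul_nonneg (sq_nonneg (1 - r)) (show (0:ℝ) ≤ 8 * Real.pi ^ 2 - 1 by nlinarith),
      mul_nonneg (show (0:ℝ) ≤ r - 1/2 by linarith) (sq_nonneg u)]
  · have h14 : (1/4 : ℝ) ≤ (1 - r) ^ 2 := by nlinarith
    have hπ2 : (9:ℝ) < Real.pi ^ 2 := by nlinarith
    have hnn : (0:ℝ) ≤ 2 * r * (1 - Real.cos u) * (8 * Real.pi ^ 2) := by
      have h1 : (0:ℝ) ≤ 1 - Real.cos u := by linarith [Real.cos_le_one u]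
      have h2 : (0:ℝ) ≤ 8 * Real.pi ^ 2 := by positivity
      nlinarith [mul_nonneg (mul_nonneg hr0 h1) h2]
    nlinarith [h14, hu2, hπ2, hnn, sq_nonneg (1 - r)]
lemma calc_bound (α : ℝ) (hα0 : 0 < α) (hα1 : α < 1) (δ : ℝ) (hδ0 : 0 < δ) (hδ1 : δ ≤ 1) :
    (∫ u in (-Real.pi)..Real.pi, |u| ^ α / (δ ^ 2 + u ^ 2))
      ≤ (2 + 2 / (1 - α)) * δ ^ (α - 1) := by
  have hπ : (3:ℝ) < Real.pi := Real.pi_gt_three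
  have hδπ : δ < Real.pi := by linarith
  set f : ℝ → ℝ := fun u => |u| ^ α / (δ ^ 2 + u ^ 2) with hf
  have hfc : Continuous f := by
    apply Continuous.div (_root_.continuous_abs.rpow_const (fun x => Or.inr hα0.le))
      (by continuity)
    intro u; positivity
  have hint : ∀ a b : ℝ, IntervalIntegrable f MeasureTheory.volume a b :=
    fun a b => hfc.intervalIntegrable a b
  -- the integral over [δ, π] of u ^ (α-2)
  have hrint : IntervalIntegrable (fun u : ℝ => u ^ (α - 2)) MeasureTheory.volume δ Real.pi := by
    apply ContinuousOn.intervalIntegrable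
    apply ContinuousOn.rpow_const continuousOn_id
    intro x hx
    rw [Set.uIcc_of_le hδπ.le] at hx
    exact Or.inl (ne_of_gt (lt_of_lt_of_le hδ0 hx.1))
  have hval : (∫ u in δ..Real.pi, u ^ (α - 2))
      = (Real.pi ^ (α - 1) - δ ^ (α - 1)) / (α - 1) := by
    rw [integral_rpow (Or.inr ⟨by intro h; rw [show α - 2 = -1 ↔ α = 1 by constructor <;> (intro; linarith)] at h; linarith, by
      rw [Set.uIcc_of_le hδπ.le]; intro h; exact absurd h.1 (by linarith)⟩)]
    rw [show α - 2 + 1 = α - 1 by ring]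
  have hval2 : (∫ u in δ..Real.pi, u ^ (α - 2)) ≤ δ ^ (α - 1) / (1 - α) := by
    rw [hval]
    have hππ : 0 < Real.pi ^ (α - 1) := Real.rpow_pos_of_pos Real.pi_pos _
    rw [show (α - 1) = -(1 - α) by ring, div_neg, ← neg_div, neg_sub]
    gcongr
    · linarith [Real.rpow_pos_of_pos Real.pi_pos (-(1 - α))]
  have hpow2 : ∀ x : ℝ, 0 < x → x ^ (α - 2) = x ^ α / x ^ 2 := by
    intro x hx
    rw [Real.rpow_sub hx, show ((2:ℝ)) = ((2:ℕ):ℝ) by norm_num, Real.rpow_natCast]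
  -- pointwise bound on [δ, π]
  have hfb : ∀ u ∈ Set.Icc δ Real.pi, f u ≤ u ^ (α - 2) := by
    intro u hu
    have hu0 : 0 < u := lt_of_lt_of_le hδ0 hu.1
    rw [hpow2 u hu0, hf]
    simp only
    rw [abs_of_pos hu0]
    apply div_le_div_of_nonneg_left (Real.rpow_nonneg hu0.le α) (by positivity) ?_ |>.trans_eq rfl
    nlinarith [sq_nonneg δ]
  have hR : (∫ u in δ..Real.pi, f u) ≤ δ ^ (α - 1) / (1 - α) :=
    (integral_mono_on hδπ.le (hint _ _) hrint hfb).trans hval2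
  have hfeven : (fun u => f (-u)) = f := by
    funext u
    simp only [hf, abs_neg, neg_sq]
  have hL0 : (∫ u in δ..Real.pi, f (-u)) = ∫ u in (-Real.pi)..(-δ), f u :=
    integral_comp_neg f
  have hL : (∫ u in (-Real.pi)..(-δ), f u) ≤ δ ^ (α - 1) / (1 - α) := by
    rw [← hL0, hfeven]
    exact hR
  have hM : (∫ u in (-δ)..δ, f u) ≤ 2 * δ ^ (α - 1) := by
    have hb : ∀ u ∈ Set.Icc (-δ) δ, f u ≤ δ ^ α / δ ^ 2 := by
      intro u hu
      have h1 : |u| ≤ δ := abs_le.mpr ⟨hu.1, hu.2⟩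
      have h2 : |u| ^ α ≤ δ ^ α := Real.rpow_le_rpow (abs_nonneg u) h1 hα0.le
      exact div_le_div₀ (Real.rpow_nonneg hδ0.le α) h2 (by positivity) (by nlinarith [sq_nonneg u])
    calc (∫ u in (-δ)..δ, f u) ≤ ∫ _ in (-δ)..δ, δ ^ α / δ ^ 2 :=
          integral_mono_on (by linarith) (hint _ _) intervalIntegrable_const hb
      _ = (δ - -δ) * (δ ^ α / δ ^ 2) := by rw [integral_const, smul_eq_mul]
      _ = 2 * δ ^ (α - 1) := by
          rw [← hpow2 δ hδ0, show δ - -δ = 2 * δ by ring, mul_assoc,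
            ← Real.rpow_one_add' hδ0.le (by intro h; linarith : 1 + (α - 2) ≠ 0),
            show 1 + (α - 2) = α - 1 by ring]
  have hsplit : (∫ u in (-Real.pi)..Real.pi, f u)
      = (∫ u in (-Real.pi)..(-δ), f u) + (∫ u in (-δ)..δ, f u) + (∫ u in δ..Real.pi, f u) := by
    rw [integral_add_adjacent_intervals (hint _ _) (hint _ _),
      integral_add_adjacent_intervals (hint _ _) (hint _ _)]
  rw [show (∫ u in (-Real.pi)..Real.pi, |u| ^ α / (δ ^ 2 + u ^ 2))
      = ∫ u in (-Real.pi)..Real.pi, f u from rfl, hsplit,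
    show (2 + 2 / (1 - α)) * δ ^ (α - 1)
      = δ ^ (α - 1) / (1 - α) + 2 * δ ^ (α - 1) + δ ^ (α - 1) / (1 - α) by ring]
  linarith

lemma expI_sub_ne' (r θ t : ℝ) (hr0 : 0 ≤ r) (hr1 : r < 1) :
    Complex.exp (t * Complex.I) - (r : ℂ) * Complex.exp (θ * Complex.I) ≠ 0 := by
  intro h
  have h2 : Complex.exp (t * Complex.I) = (r : ℂ) * Complex.exp (θ * Complex.I) :=
    sub_eq_zero.mp h
  have h3 : ‖Complex.exp (t * Complex.I)‖ = ‖(r : ℂ) * Complex.exp (θ * Complex.I)‖ := by rw [h2]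
  rw [Complex.norm_exp_ofReal_mul_I, norm_mul, Complex.norm_exp_ofReal_mul_I,
    Complex.norm_real, Real.norm_eq_abs, _root_.abs_of_nonneg hr0] at h3
  simp at h3
  linarith

lemma holder_continuous (α : ℝ) (hα0 : 0 < α) (φ : ℝ → ℝ) (A : ℝ)
    (hHolder : ∀ s t : ℝ, |φ s - φ t| ≤ A * |s - t| ^ α) : Continuous φ := by
  rw [continuous_iff_continuousAt]
  intro t
  rw [ContinuousAt, tendsto_iff_dist_tendsto_zero]
  have hb : Filter.Tendsto (fun s : ℝ => A * |s - t| ^ α) (nhds t) (nhds 0) := by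
    have hg : Continuous fun s : ℝ => A * |s - t| ^ α :=
      continuous_const.mul (((continuous_id.sub continuous_const).abs).rpow_const
        (fun x => Or.inr hα0.le))
    have h2 := hg.continuousAt (x := t)
    rw [ContinuousAt] at h2
    simpa [Real.zero_rpow (ne_of_gt hα0)] using h2
  exact squeeze_zero (fun s => dist_nonneg)
    (fun s => by rw [Real.dist_eq]; exact hHolder s t) hb

theorem stmt9 (α : ℝ) (hα0 : 0 < α) (hα1 : α < 1)
    (φ : ℝ → ℝ) (A : ℝ) (hA : 0 < A)
    (hHolder : ∀ s t : ℝ, |φ s - φ t| ≤ A * |s - t| ^ α)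
    (hper : ∀ t : ℝ, φ (t + 2 * Real.pi) = φ t) :
    ∃ C > 0, ∀ r ∈ Ico (0:ℝ) 1, ∀ θ : ℝ,
      ‖(1 / (Real.pi : ℂ)) *
        ∫ t in (0:ℝ)..(2 * Real.pi),
          Complex.exp (t * Complex.I) /
            (Complex.exp (t * Complex.I) - r * Complex.exp (θ * Complex.I)) ^ 2 * (φ t : ℂ)‖ ≤
        C * (1 - r) ^ (α - 1) := by
  have hπ : (0:ℝ) < Real.pi := Real.pi_pos
  have h1α : (0:ℝ) < 1 - α := by linarith
  have hφc : Continuous φ := holder_continuous α hα0 φ A hHolder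
  refine ⟨8 * Real.pi * A * (2 + 2 / (1 - α)), by positivity, ?_⟩
  rintro r ⟨hr0, hr1⟩ θ
  set δ := 1 - r with hδdef
  have hδ0 : 0 < δ := by simp only [hδdef]; linarith
  have hδ1 : δ ≤ 1 := by simp only [hδdef]; linarith
  set K : ℝ → ℂ := fun u => Complex.exp (u * Complex.I) /
    (Complex.exp (u * Complex.I) - (r : ℂ)) ^ 2 with hK
  set g : ℝ → ℂ := fun u => K u * (φ (u + θ) : ℂ) with hg
  -- continuity facts
  have hKc : Continuous K := kernel_cont r hr0 hr1
  have hgc : Continuous g := hKc.mul (Complex.continuous_ofReal.comp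
    (hφc.comp (continuous_id.add continuous_const)))
  have hdc : Continuous fun u : ℝ => K u * ((φ (u + θ) - φ θ : ℝ) : ℂ) :=
    hKc.mul (Complex.continuous_ofReal.comp
      ((hφc.comp (continuous_id.add continuous_const)).sub continuous_const))
  -- pointwise factorization
  have hfact : ∀ t : ℝ, Complex.exp (t * Complex.I) /
      (Complex.exp (t * Complex.I) - r * Complex.exp (θ * Complex.I)) ^ 2 * (φ t : ℂ)
      = Complex.exp (-(θ : ℂ) * Complex.I) * g (t - θ) := by
    intro t
    have hWne : Complex.exp ((θ : ℂ) * Complex.I) ≠ 0 := Complex.exp_ne_zero _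
    have e0 : Complex.exp (-(θ : ℂ) * Complex.I) = (Complex.exp ((θ : ℂ) * Complex.I))⁻¹ := by
      rw [← Complex.exp_neg]; ring_nf
    have e1 : Complex.exp (((t - θ : ℝ) : ℂ) * Complex.I)
        = Complex.exp ((t : ℂ) * Complex.I) / Complex.exp ((θ : ℂ) * Complex.I) := by
      rw [← Complex.exp_sub]; push_cast; ring_nf
    have hne : Complex.exp (((t - θ : ℝ) : ℂ) * Complex.I) - (r : ℂ) ≠ 0 :=
      expI_sub_ne r hr0 hr1 _
    have hne2 : Complex.exp ((t : ℂ) * Complex.I) - (r : ℂ) * Complex.exp ((θ : ℂ) * Complex.I) ≠ 0 :=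
      expI_sub_ne' r θ t hr0 hr1
    have key : ((t - θ : ℝ) : ℂ) * Complex.I = ((t : ℂ) - (θ : ℂ)) * Complex.I := by push_cast; ring
    have hne' : Complex.exp ((t : ℂ) * Complex.I) / Complex.exp ((θ : ℂ) * Complex.I) - (r : ℂ) ≠ 0 := by
      rw [← e1]; exact hne
    simp only [hg, hK, show φ (t - θ + θ) = φ t by ring_nf]
    rw [e0, e1]
    rw [div_sub' hWne, div_pow, div_div_eq_mul_div]
    have hX : Complex.exp ((t : ℂ) * Complex.I) - Complex.exp ((θ : ℂ) * Complex.I) * (r : ℂ) ≠ 0 := by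
      intro h; apply hne2; linear_combination h
    field_simp [hX, hne2]
  -- shift of variable
  have hshift : (∫ t in (0:ℝ)..(2 * Real.pi),
        Complex.exp (t * Complex.I) /
          (Complex.exp (t * Complex.I) - r * Complex.exp (θ * Complex.I)) ^ 2 * (φ t : ℂ))
      = Complex.exp (-(θ : ℂ) * Complex.I) * ∫ u in (-Real.pi)..Real.pi, g u := by
    rw [integral_congr (fun t _ => hfact t), intervalIntegral.integral_const_mul]
    congr 1
    rw [integral_comp_sub_right g θ]
    have hgper : Function.Periodic g (2 * Real.pi) := by
      intro u
      simp only [hg, hK]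
      have he : Complex.exp (((u + 2 * Real.pi : ℝ) : ℂ) * Complex.I)
          = Complex.exp ((u : ℂ) * Complex.I) := by
        push_cast
        rw [add_mul, Complex.exp_add, Complex.exp_two_pi_mul_I, mul_one]
      rw [he, show u + 2 * Real.pi + θ = (u + θ) + 2 * Real.pi by ring, hper]
    have := hgper.intervalIntegral_add_eq (0 - θ) (-Real.pi)
    rw [show 2 * Real.pi - θ = 0 - θ + 2 * Real.pi by ring, this,
      show -Real.pi + 2 * Real.pi = Real.pi by ring]
  -- subtract the constant φ θ
  have hsub : (∫ u in (-Real.pi)..Real.pi, g u)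
      = ∫ u in (-Real.pi)..Real.pi, K u * ((φ (u + θ) - φ θ : ℝ) : ℂ) := by
    have h1 : ∀ u : ℝ, g u = K u * ((φ (u + θ) - φ θ : ℝ) : ℂ) + (φ θ : ℂ) * K u := by
      intro u; simp only [hg]; push_cast; ring
    rw [integral_congr (fun u _ => h1 u),
      integral_add (g := fun u => (φ θ : ℂ) * K u) (hdc.intervalIntegrable _ _)
        ((continuous_const.mul hKc).intervalIntegrable _ _),
      intervalIntegral.integral_const_mul, kernel_int_zero r hr0 hr1, mul_zero, add_zero]
  -- norm bound
  have hnorm_pt : ∀ u ∈ Set.Icc (-Real.pi) Real.pi,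
      ‖K u * ((φ (u + θ) - φ θ : ℝ) : ℂ)‖ ≤ 8 * Real.pi ^ 2 * A * (|u| ^ α / (δ ^ 2 + u ^ 2)) := by
    intro u hu
    have huπ : |u| ≤ Real.pi := abs_le.mpr ⟨hu.1, hu.2⟩
    have hd : |φ (u + θ) - φ θ| ≤ A * |u| ^ α := by
      have := hHolder (u + θ) θ
      simpa using this
    have hden := denom_lb r u hr0 hr1 huπ
    have hden0 : (0:ℝ) < (δ ^ 2 + u ^ 2) / (8 * Real.pi ^ 2) := by positivity
    have hnK : ‖K u * ((φ (u + θ) - φ θ : ℝ) : ℂ)‖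
        = |φ (u + θ) - φ θ| / ‖Complex.exp (u * Complex.I) - (r : ℂ)‖ ^ 2 := by
      simp only [hK, norm_mul, norm_div, norm_pow,
        Complex.norm_exp_ofReal_mul_I, Complex.norm_real, Real.norm_eq_abs, one_div]
      rw [div_eq_mul_inv, mul_comm]
    rw [hnK]
    calc |φ (u + θ) - φ θ| / ‖Complex.exp (u * Complex.I) - (r : ℂ)‖ ^ 2
        ≤ (A * |u| ^ α) / ((δ ^ 2 + u ^ 2) / (8 * Real.pi ^ 2)) :=
          div_le_div₀ (by positivity) hd hden0 hden
      _ = 8 * Real.pi ^ 2 * A * (|u| ^ α / (δ ^ 2 + u ^ 2)) := by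
          rw [div_div_eq_mul_div]; ring
  -- put everything together
  have hmono : (∫ u in (-Real.pi)..Real.pi, ‖K u * ((φ (u + θ) - φ θ : ℝ) : ℂ)‖)
      ≤ ∫ u in (-Real.pi)..Real.pi, 8 * Real.pi ^ 2 * A * (|u| ^ α / (δ ^ 2 + u ^ 2)) := by
    apply integral_mono_on (by linarith) (hdc.norm.intervalIntegrable _ _)
      ((continuous_const.mul ((_root_.continuous_abs.rpow_const (fun x => Or.inr hα0.le)).div
        (by continuity) (fun u => by positivity))).intervalIntegrable _ _) hnorm_pt
  have hcalc : (∫ u in (-Real.pi)..Real.pi, 8 * Real.pi ^ 2 * A * (|u| ^ α / (δ ^ 2 + u ^ 2)))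
      ≤ 8 * Real.pi ^ 2 * A * ((2 + 2 / (1 - α)) * δ ^ (α - 1)) := by
    rw [intervalIntegral.integral_const_mul]
    exact mul_le_mul_of_nonneg_left (calc_bound α hα0 hα1 δ hδ0 hδ1) (by positivity)
  rw [hshift, hsub] at *
  rw [norm_mul, norm_mul]
  have habs1 : ‖1 / (Real.pi : ℂ)‖ = 1 / Real.pi := by
    rw [norm_div, norm_one, Complex.norm_real, Real.norm_eq_abs, _root_.abs_of_pos hπ]
  have habs2 : ‖Complex.exp (-(θ : ℂ) * Complex.I)‖ = 1 := by
    rw [show -(θ : ℂ) * Complex.I = ((-θ : ℝ) : ℂ) * Complex.I by push_cast; ring,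
      Complex.norm_exp_ofReal_mul_I]
  rw [habs1, habs2, one_mul]
  have habs3 : ‖∫ u in (-Real.pi)..Real.pi, K u * ((φ (u + θ) - φ θ : ℝ) : ℂ)‖
      ≤ ∫ u in (-Real.pi)..Real.pi, ‖K u * ((φ (u + θ) - φ θ : ℝ) : ℂ)‖ := by
    exact norm_integral_le_integral_norm (by linarith)
  calc (1 / Real.pi) * ‖∫ u in (-Real.pi)..Real.pi, K u * ((φ (u + θ) - φ θ : ℝ) : ℂ)‖
      ≤ (1 / Real.pi) * (8 * Real.pi ^ 2 * A * ((2 + 2 / (1 - α)) * δ ^ (α - 1))) := by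
        apply mul_le_mul_of_nonneg_left (habs3.trans (hmono.trans hcalc)) (by positivity)
    _ = 8 * Real.pi * A * (2 + 2 / (1 - α)) * δ ^ (α - 1) := by
        field_simp
end

section
/- Let 0 < α < 1 and let f = h + conj(g) be a harmonic K-quasiregular mapping on the unit disk 𝔻 (so h, g are holomorphic on 𝔻 and |g'(z)| ≤ k·|h'(z)| on 𝔻 for some k ∈ [0,1)), with u = Re f. Suppose u extends continuously to the closed unit disk and its boundary values satisfy |u(e^{is}) - u(e^{it})| ≤ A·|s-t|^α for all s,t ∈ ℝ and some A > 0. Then there is a constant C > 0 such that |h'(z)| ≤ C·(1-|z|)^{α-1} and |g'(z)| ≤ C·(1-|z|)^{α-1} for all z ∈ 𝔻. -/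
set_option maxHeartbeats 1000000

open Complex Metric Set Real

lemma aux_kernel (r ρ s : ℝ) (hr0 : 0 ≤ r) (hρ1 : ρ ≤ 1) (hρ2 : (1+r)/2 ≤ ρ) (hs : |s| ≤ π) :
    max ((ρ - r)^2) (s^2/(16*π^2)) ≤ (ρ * Real.cos s - r)^2 + (ρ * Real.sin s)^2 := by
  have hπ := Real.pi_pos
  have hπ2 : 0 < π^2 := by positivity
  have hc1 : Real.cos s ≤ 1 := Real.cos_le_one s
  have hcs : Real.cos s ≤ 1 - 2/π^2 * s^2 := Real.cos_le_one_sub_mul_cos_sq hs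
  have hpyth : Real.sin s ^ 2 + Real.cos s ^ 2 = 1 := Real.sin_sq_add_cos_sq s
  have hρ0 : 0 ≤ ρ := by nlinarith
  have hnn : 0 ≤ 2*ρ*r*(1 - Real.cos s) :=
    mul_nonneg (by positivity) (by linarith)
  have hrw : (ρ * Real.cos s - r)^2 + (ρ * Real.sin s)^2
      = (ρ - r)^2 + 2*ρ*r*(1 - Real.cos s) := by linear_combination ρ^2 * hpyth
  rw [hrw]
  have hs2 : s^2 ≤ π^2 := by nlinarith [abs_nonneg s, _root_.sq_abs s]
  rcases le_or_gt (1/2) r with hr | hr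
  · refine max_le (by linarith) ?_
    have h2ρr : 1/2 ≤ 2*ρ*r := by nlinarith
    have hcos' : 2/π^2 * s^2 ≤ 1 - Real.cos s := by linarith
    have hX : s^2/π^2 ≤ 2*ρ*r*(1-Real.cos s) := by
      have := mul_le_mul h2ρr hcos' (by positivity) (by linarith)
      calc s^2/π^2 = 1/2 * (2/π^2 * s^2) := by ring
        _ ≤ _ := this
    rw [div_le_iff₀ (by positivity)]
    have h16 : s^2/π^2 * (16*π^2) = 16 * s^2 := by field_simp
    have := mul_le_mul_of_nonneg_right hX (by positivity : (0:ℝ) ≤ 16*π^2)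
    rw [h16] at this
    nlinarith [mul_nonneg (sq_nonneg (ρ - r)) (le_of_lt hπ2), sq_nonneg s, sq_nonneg (ρ-r)]
  · refine max_le (by linarith) ?_
    have hδ : 1/4 ≤ ρ - r := by linarith
    have h1 : 1/16 ≤ (ρ-r)^2 := by nlinarith
    have h2 : s^2/(16*π^2) ≤ 1/16 := by rw [div_le_iff₀ (by positivity)]; nlinarith
    linarith

lemma aux_kernel_c (z : ℂ) (ρ t : ℝ) (hρ1 : ρ ≤ 1)
    (hρ2 : (1 + ‖z‖)/2 ≤ ρ) (hs : |t - Complex.arg z| ≤ π) :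
    max ((ρ - ‖z‖)^2) ((t - Complex.arg z)^2/(16*π^2))
      ≤ (‖circleMap 0 ρ t - z‖)^2 := by
  set r := ‖z‖ with hr
  set θ := Complex.arg z with hθ
  set s := t - θ with hsdef
  have hz : z = (r:ℂ) * Complex.exp (θ*I) := (Complex.norm_mul_exp_arg_mul_I z).symm
  have hfact : circleMap 0 ρ t - z = Complex.exp (θ*I) * ((ρ:ℂ) * Complex.exp (s*I) - r) := by
    rw [hz]
    simp only [circleMap, zero_add]
    rw [mul_sub]
    congr 1
    · rw [show cexp (↑θ * I) * (↑ρ * cexp (↑s * I)) = ↑ρ * (cexp (↑θ*I) * cexp (↑s*I)) by ring,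
        ← Complex.exp_add,
        show (θ:ℂ)*I + (s:ℂ)*I = (t:ℂ)*I by push_cast [hsdef]; ring]
    · ring
  have habs : ‖circleMap 0 ρ t - z‖ = ‖(ρ:ℂ) * Complex.exp (s*I) - r‖ := by
    rw [hfact, norm_mul, Complex.norm_exp_ofReal_mul_I, one_mul]
  rw [habs]
  have hre : ((ρ:ℂ) * Complex.exp (s*I) - r).re = ρ * Real.cos s - r := by
    simp [Complex.sub_re, Complex.mul_re, Complex.exp_ofReal_mul_I_re, Complex.exp_ofReal_mul_I_im]
  have him : ((ρ:ℂ) * Complex.exp (s*I) - r).im = ρ * Real.sin s := by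
    simp [Complex.sub_im, Complex.mul_im, Complex.exp_ofReal_mul_I_re, Complex.exp_ofReal_mul_I_im]
  rw [Complex.sq_norm, Complex.normSq_apply, hre, him, ← pow_two, ← pow_two]
  exact aux_kernel r ρ s (norm_nonneg z) hρ1 hρ2 hs

lemma aux_J (α δ' : ℝ) (hα0 : 0 < α) (hα1 : α < 1) (h0 : 0 < δ') (hδ1 : δ' ≤ 1) :
    ∫ s in (-π)..π, |s|^α / max (δ'^2) (s^2/(16*π^2))
      ≤ 2 * (1 + 16*π^2/(1-α)) * δ'^(α-1) := by
  have hπ := Real.pi_pos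
  have hδπ : δ' ≤ π := hδ1.trans (by linarith [Real.pi_gt_three])
  set f : ℝ → ℝ := fun s => |s|^α / max (δ'^2) (s^2/(16*π^2)) with hf
  have hmaxpos : ∀ s : ℝ, 0 < max (δ'^2) (s^2/(16*π^2)) :=
    fun s => lt_max_of_lt_left (by positivity)
  have habs : Continuous fun s : ℝ => |s|^α :=
    Continuous.rpow_const _root_.continuous_abs (fun x => Or.inr hα0.le)
  have hrpow : Continuous fun s : ℝ => s^α := by
    refine continuous_iff_continuousAt.2 fun x => Real.continuousAt_rpow_const x α ?_
    exact Or.inr hα0.le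
  have hcont : Continuous f :=
    Continuous.div habs (continuous_const.max ((continuous_pow 2).div_const _))
      (fun s => ne_of_gt (hmaxpos s))
  have hint : ∀ a b : ℝ, IntervalIntegrable f MeasureTheory.volume a b :=
    fun a b => hcont.intervalIntegrable a b
  have heven : ∀ s, f (-s) = f s := by
    intro s; simp [hf, abs_neg, neg_sq]
  have hsplit : ∫ s in (-π)..π, f s = (∫ s in (-π)..(0:ℝ), f s) + ∫ s in (0:ℝ)..π, f s :=
    (intervalIntegral.integral_add_adjacent_intervals (hint _ _) (hint _ _)).symm
  have hneg : ∫ s in (-π)..(0:ℝ), f s = ∫ s in (0:ℝ)..π, f s := by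
    rw [show ∫ s in (0:ℝ)..π, f s = ∫ s in (0:ℝ)..π, f (-s) by
      refine intervalIntegral.integral_congr fun x _ => (heven x).symm]
    rw [intervalIntegral.integral_comp_neg f]
    norm_num
  have hhalfsplit : ∫ s in (0:ℝ)..π, f s = (∫ s in (0:ℝ)..δ', f s) + ∫ s in δ'..π, f s :=
    (intervalIntegral.integral_add_adjacent_intervals (hint _ _) (hint _ _)).symm
  have hδ'm1 : (0:ℝ) ≤ δ'^(α-1) := Real.rpow_nonneg h0.le _
  -- part 1
  have hpart1 : ∫ s in (0:ℝ)..δ', f s ≤ δ'^(α-1) := by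
    have hmono : ∫ s in (0:ℝ)..δ', f s ≤ ∫ s in (0:ℝ)..δ', s^α / δ'^2 := by
      apply intervalIntegral.integral_mono_on h0.le (hint _ _)
        ((hrpow.div_const _).intervalIntegrable _ _)
      intro x hx
      have hx0 : 0 ≤ x := hx.1
      show |x|^α / _ ≤ _
      rw [_root_.abs_of_nonneg hx0]
      exact div_le_div_of_nonneg_left (Real.rpow_nonneg hx0 α) (by positivity) (le_max_left _ _)
    have hval : ∫ s in (0:ℝ)..δ', s^α / δ'^2 = δ'^(α+1)/(α+1)/δ'^2 := by
      rw [intervalIntegral.integral_div, integral_rpow (Or.inl (by linarith))]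
      rw [Real.zero_rpow (by linarith)]
      ring_nf
    have hpow : δ'^(α+1)/δ'^2 = δ'^(α-1) := by
      rw [← Real.rpow_natCast δ' 2, ← Real.rpow_sub h0]
      push_cast
      ring_nf
    have : δ'^(α+1)/(α+1)/δ'^2 = δ'^(α-1)/(α+1) := by
      rw [div_right_comm, hpow]
    refine (hmono.trans_eq hval).trans ?_
    rw [this]
    exact div_le_self hδ'm1 (by linarith)
  -- part 2
  have hpart2 : ∫ s in δ'..π, f s ≤ 16*π^2/(1-α) * δ'^(α-1) := by
    have hcont2 : ContinuousOn (fun s : ℝ => 16*π^2 * s^(α-2)) (uIcc δ' π) := by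
      refine ContinuousOn.mul continuousOn_const ?_
      intro x hx
      rw [uIcc_of_le hδπ] at hx
      exact (Real.continuousAt_rpow_const x (α-2) (Or.inl (by rintro rfl; exact absurd hx.1 (by simpa using h0)))).continuousWithinAt
    have hmono : ∫ s in δ'..π, f s ≤ ∫ s in δ'..π, 16*π^2 * s^(α-2) := by
      apply intervalIntegral.integral_mono_on hδπ (hint _ _)
        (hcont2.intervalIntegrable)
      intro x hx
      have hx0 : 0 < x := h0.trans_le hx.1
      show |x|^α / _ ≤ _
      rw [_root_.abs_of_nonneg hx0.le]
      have h1 : x^α / max (δ'^2) (x^2/(16*π^2)) ≤ x^α / (x^2/(16*π^2)) :=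
        div_le_div_of_nonneg_left (Real.rpow_nonneg hx0.le α) (by positivity) (le_max_right _ _)
      refine h1.trans_eq ?_
      have hx2 : x^(α-(2:ℝ)) = x^α / x^(2:ℕ) := by
        rw [Real.rpow_sub hx0]
        norm_num
      rw [hx2]
      field_simp
    have hval : ∫ s in δ'..π, 16*π^2 * s^(α-2)
        = 16*π^2 * ((π^(α-1) - δ'^(α-1))/(α-1)) := by
      rw [intervalIntegral.integral_const_mul, integral_rpow]
      · rw [show α-2+1 = α-1 by ring]
      · right
        refine ⟨by intro hc; linarith, ?_⟩
        rw [uIcc_of_le hδπ]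
        rintro ⟨h1, -⟩
        exact absurd h1 (not_le.2 h0)
    refine (hmono.trans_eq hval).trans ?_
    have hπα : (0:ℝ) ≤ π^(α-1) := Real.rpow_nonneg hπ.le _
    have : (π^(α-1) - δ'^(α-1))/(α-1) ≤ δ'^(α-1)/(1-α) := by
      have hne : α - 1 ≠ 0 := by linarith
      have hne2 : 1 - α ≠ 0 := by linarith
      have heq : (π^(α-1) - δ'^(α-1))/(α-1) = (δ'^(α-1) - π^(α-1))/(1-α) := by
        field_simp
        ring
      rw [heq, div_le_div_iff_of_pos_right (by linarith)]
      linarith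
    calc 16*π^2 * ((π^(α-1) - δ'^(α-1))/(α-1)) ≤ 16*π^2 * (δ'^(α-1)/(1-α)) := by
          exact mul_le_mul_of_nonneg_left this (by positivity)
      _ = 16*π^2/(1-α) * δ'^(α-1) := by ring
  calc ∫ s in (-π)..π, f s = 2 * ∫ s in (0:ℝ)..π, f s := by rw [hsplit, hneg]; ring
    _ = 2 * ((∫ s in (0:ℝ)..δ', f s) + ∫ s in δ'..π, f s) := by rw [hhalfsplit]
    _ ≤ 2 * (δ'^(α-1) + 16*π^2/(1-α) * δ'^(α-1)) := by linarith
    _ = 2 * (1 + 16*π^2/(1-α)) * δ'^(α-1) := by ring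

lemma aux_intconj (f : ℝ → ℂ) (a b : ℝ) :
    ∫ t in a..b, (starRingEnd ℂ) (f t) = (starRingEnd ℂ) (∫ t in a..b, f t) := by
  simp only [intervalIntegral]
  rw [integral_conj, integral_conj, ← map_sub]

lemma aux_rep (F : ℂ → ℂ) (U : ℂ → ℝ) (hF : DifferentiableOn ℂ F (ball (0:ℂ) 1))
    (hUcont : ContinuousOn U (closedBall (0:ℂ) 1))
    (hFU : ∀ w ∈ ball (0:ℂ) 1, F w + (starRingEnd ℂ) (F w) = 2 * (U w : ℂ))
    (z : ℂ) (ρ : ℝ) (hz : ‖z‖ < ρ) (hρ : ρ < 1) (c : ℝ) :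
    deriv F z = (2*(π:ℂ)*Complex.I)⁻¹ * ∫ t in (0:ℝ)..2*π,
      (circleMap 0 ρ t * Complex.I) *
        (((circleMap 0 ρ t - z)^2)⁻¹ * (2*(U (circleMap 0 ρ t) : ℂ) - 2*(c:ℂ))) := by
  have hρ0 : 0 < ρ := (norm_nonneg z).trans_lt hz
  have hsub : closedBall (0:ℂ) ρ ⊆ ball (0:ℂ) 1 := closedBall_subset_ball hρ
  have hzρ : z ∈ ball (0:ℂ) ρ := by simpa [mem_ball_zero_iff] using hz
  have habsw : ∀ t : ℝ, ‖circleMap 0 ρ t‖ = ρ := by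
    intro t; rw [norm_circleMap_zero, _root_.abs_of_pos hρ0]
  have hwmem : ∀ t : ℝ, circleMap 0 ρ t ∈ ball (0:ℂ) 1 := by
    intro t; rw [mem_ball_zero_iff]; rw [show ‖circleMap 0 ρ t‖ = ‖_‖ from rfl, habsw]; exact hρ
  have hwz : ∀ t : ℝ, circleMap 0 ρ t - z ≠ 0 := by
    intro t hc
    rw [sub_eq_zero] at hc
    rw [← hc, habsw] at hz
    exact lt_irrefl _ hz
  have hwz2 : ∀ t : ℝ, ((circleMap 0 ρ t - z)^2) ≠ 0 := fun t => pow_ne_zero _ (hwz t)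
  have hw0 : ∀ t : ℝ, circleMap 0 ρ t ≠ 0 := fun t => circleMap_ne_center (ne_of_gt hρ0)
  -- Cauchy formula
  have cauchy := Complex.two_pi_I_inv_smul_circleIntegral_sub_sq_inv_smul_of_differentiable
    isOpen_ball hsub hF hzρ
  simp only [circleIntegral, deriv_circleMap, smul_eq_mul] at cauchy
  -- continuity facts
  have hcw : Continuous (circleMap 0 ρ) := continuous_circleMap 0 ρ
  have hcF : Continuous fun t => F (circleMap 0 ρ t) :=
    hF.continuousOn.comp_continuous hcw hwmem
  have hcU : Continuous fun t => U (circleMap 0 ρ t) :=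
    hUcont.comp_continuous hcw (fun t => ball_subset_closedBall (hwmem t))
  have hcK : Continuous fun t => (circleMap 0 ρ t * Complex.I) * ((circleMap 0 ρ t - z)^2)⁻¹ := by
    apply Continuous.mul (hcw.mul continuous_const)
    exact (((hcw.sub continuous_const).pow 2).inv₀ hwz2)
  -- constant term vanishes
  have constzero : ∫ t in (0:ℝ)..2*π,
      (circleMap 0 ρ t * Complex.I) * ((circleMap 0 ρ t - z)^2)⁻¹ = 0 := by
    have h := circleIntegral.integral_sub_zpow_of_ne (n := -2) (by decide) 0 z ρ
    simp only [circleIntegral, deriv_circleMap, smul_eq_mul, zpow_neg, zpow_ofNat] at h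
    convert h using 3
  -- conjugate term vanishes
  have conjzero : ∫ t in (0:ℝ)..2*π,
      (circleMap 0 ρ t * Complex.I) *
        (((circleMap 0 ρ t - z)^2)⁻¹ * (starRingEnd ℂ) (F (circleMap 0 ρ t))) = 0 := by
    set G : ℂ → ℂ := fun w => F w * (ρ:ℂ)^2 * ((((ρ:ℂ))^2 - (starRingEnd ℂ) z * w)^2)⁻¹ with hG
    have hden : ∀ w : ℂ, ‖w‖ ≤ ρ → ((ρ:ℂ))^2 - (starRingEnd ℂ) z * w ≠ 0 := by
      intro w hw hc
      rw [sub_eq_zero] at hc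
      have h1 : ‖((ρ:ℂ))^2‖ = ρ^2 := by
        rw [norm_pow, Complex.norm_real, Real.norm_eq_abs, _root_.abs_of_pos hρ0]
      have h2 : ‖(starRingEnd ℂ) z * w‖ < ρ^2 := by
        rw [norm_mul, Complex.norm_conj]
        calc ‖z‖ * ‖w‖ ≤ ‖z‖ * ρ :=
              mul_le_mul_of_nonneg_left hw (norm_nonneg z)
          _ < ρ * ρ := by exact mul_lt_mul_of_pos_right hz hρ0
          _ = ρ^2 := (sq ρ).symm
      rw [hc] at h1
      rw [h1] at h2
      exact lt_irrefl _ h2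
    have hG0 : (∮ w in C(0, ρ), G w) = 0 := by
      apply circleIntegral_eq_zero_of_differentiable_on_off_countable hρ0.le countable_empty
      · apply ContinuousOn.mul
        · exact ((hF.continuousOn.mono hsub).mul continuousOn_const)
        · apply ContinuousOn.inv₀
          · exact (continuousOn_const.sub (continuousOn_const.mul continuousOn_id)).pow 2
          · intro w hw
            exact pow_ne_zero _ (hden w (by simpa [mem_closedBall_zero_iff] using hw))
      · intro w hw
        have hw1 : w ∈ ball (0:ℂ) 1 := ball_subset_ball hρ.le hw.1
        have hwρ : ‖w‖ ≤ ρ := by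
          have := hw.1
          rw [mem_ball_zero_iff] at this
          exact le_of_lt this
        apply DifferentiableAt.mul
        · exact (hF.differentiableAt (isOpen_ball.mem_nhds hw1)).mul (differentiableAt_const _)
        · apply DifferentiableAt.inv
          · exact ((differentiableAt_const _).sub ((differentiableAt_const _).mul differentiableAt_id)).pow 2
          · exact pow_ne_zero _ (hden w hwρ)
    simp only [circleIntegral, deriv_circleMap, smul_eq_mul] at hG0
    have hpt : ∀ t : ℝ, (starRingEnd ℂ) ((circleMap 0 ρ t * Complex.I) *
        (((circleMap 0 ρ t - z)^2)⁻¹ * (starRingEnd ℂ) (F (circleMap 0 ρ t))))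
        = -(circleMap 0 ρ t * Complex.I * G (circleMap 0 ρ t)) := by
      intro t
      set w := circleMap 0 ρ t with hwdef
      have hwc : (starRingEnd ℂ) w = (ρ:ℂ)^2 / w := by
        rw [eq_div_iff (hw0 t), mul_comm, Complex.mul_conj, Complex.normSq_eq_norm_sq, habsw]
        norm_num
      have hd1 : ((ρ:ℂ))^2 - (starRingEnd ℂ) z * w ≠ 0 := hden w (le_of_eq (habsw t))
      have hd2 : (ρ:ℂ)^2/w - (starRingEnd ℂ) z ≠ 0 := by
        intro hc
        apply hd1
        have := congrArg (· * w) hc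
        simp only [sub_mul, zero_mul, div_mul_cancel₀ _ (hw0 t)] at this
        linear_combination this - (ρ:ℂ)^2 * mul_inv_cancel₀ (hw0 t)
      have hconjsub : (starRingEnd ℂ) (w - z) = ((ρ:ℂ)^2 - (starRingEnd ℂ) z * w) / w := by
        rw [map_sub, hwc]
        field_simp [hw0 t]
        rw [sub_div, mul_div_cancel_left₀ _ (hw0 t)]
      simp only [map_mul, map_inv₀, map_pow, hconjsub, Complex.conj_conj, Complex.conj_I,
        hwc, hG, div_pow, inv_div]
      field_simp [hw0 t, hd1]
    have : ∫ t in (0:ℝ)..2*π, (starRingEnd ℂ) ((circleMap 0 ρ t * Complex.I) *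
        (((circleMap 0 ρ t - z)^2)⁻¹ * (starRingEnd ℂ) (F (circleMap 0 ρ t)))) = 0 := by
      rw [intervalIntegral.integral_congr (g := fun t => -(circleMap 0 ρ t * Complex.I * G (circleMap 0 ρ t)))
        (fun t _ => hpt t)]
      rw [intervalIntegral.integral_neg, hG0, neg_zero]
    rw [aux_intconj] at this
    exact star_eq_zero.mp this
  -- integrability
  have hint1 : IntervalIntegrable (fun t => (circleMap 0 ρ t * Complex.I) *
      (((circleMap 0 ρ t - z)^2)⁻¹ * F (circleMap 0 ρ t))) MeasureTheory.volume 0 (2*π) := by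
    apply Continuous.intervalIntegrable
    exact (hcw.mul continuous_const).mul
      ((((hcw.sub continuous_const).pow 2).inv₀ hwz2).mul hcF)
  have hint2 : IntervalIntegrable (fun t => (circleMap 0 ρ t * Complex.I) *
      (((circleMap 0 ρ t - z)^2)⁻¹ * (starRingEnd ℂ) (F (circleMap 0 ρ t)))) MeasureTheory.volume 0 (2*π) := by
    apply Continuous.intervalIntegrable
    exact (hcw.mul continuous_const).mul
      ((((hcw.sub continuous_const).pow 2).inv₀ hwz2).mul (continuous_conj.comp hcF))
  have hint3 : IntervalIntegrable (fun t => (2*(c:ℂ)) * ((circleMap 0 ρ t * Complex.I) *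
      ((circleMap 0 ρ t - z)^2)⁻¹)) MeasureTheory.volume 0 (2*π) :=
    (continuous_const.mul hcK).intervalIntegrable _ _
  -- combine
  have hsplit : ∫ t in (0:ℝ)..2*π,
      (circleMap 0 ρ t * Complex.I) *
        (((circleMap 0 ρ t - z)^2)⁻¹ * (2*(U (circleMap 0 ρ t) : ℂ) - 2*(c:ℂ)))
      = ∫ t in (0:ℝ)..2*π,
        ((circleMap 0 ρ t * Complex.I) * (((circleMap 0 ρ t - z)^2)⁻¹ * F (circleMap 0 ρ t))
        + (circleMap 0 ρ t * Complex.I) * (((circleMap 0 ρ t - z)^2)⁻¹ * (starRingEnd ℂ) (F (circleMap 0 ρ t)))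
        - (2*(c:ℂ)) * ((circleMap 0 ρ t * Complex.I) * ((circleMap 0 ρ t - z)^2)⁻¹)) := by
    apply intervalIntegral.integral_congr
    intro t _
    have h2U : 2*(U (circleMap 0 ρ t) : ℂ) = F (circleMap 0 ρ t) + (starRingEnd ℂ) (F (circleMap 0 ρ t)) :=
      (hFU _ (hwmem t)).symm
    simp only
    rw [h2U]
    ring
  rw [hsplit, intervalIntegral.integral_sub (hint1.add hint2) hint3,
    intervalIntegral.integral_add hint1 hint2, conjzero,
    intervalIntegral.integral_const_mul, constzero]
  simp only [mul_zero, sub_zero, add_zero]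
  rw [← cauchy]

lemma aux_main (α A : ℝ) (hα0 : 0 < α) (hα1 : α < 1) (hA : 0 < A)
    (F : ℂ → ℂ) (hF : DifferentiableOn ℂ F (ball (0:ℂ) 1))
    (U : ℂ → ℝ) (hUcont : ContinuousOn U (closedBall (0:ℂ) 1))
    (hFU : ∀ w ∈ ball (0:ℂ) 1, F w + (starRingEnd ℂ) (F w) = 2 * (U w : ℂ))
    (hUHolder : ∀ s t : ℝ,
      |U (Complex.exp (s * Complex.I)) - U (Complex.exp (t * Complex.I))| ≤ A * |s - t| ^ α)
    (z : ℂ) (hz : z ∈ ball (0:ℂ) 1) :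
    ‖deriv F z‖ ≤ (4*A*(1+16*π^2/(1-α))/π) * (1 - ‖z‖)^(α-1) := by
  have hπ := Real.pi_pos
  set r := ‖z‖ with hrdef
  set θ := Complex.arg z with hθdef
  have hr0 : 0 ≤ r := norm_nonneg z
  have hr1 : r < 1 := by rwa [mem_ball_zero_iff] at hz
  set δ := 1 - r with hδdef
  have hδ0 : 0 < δ := by simp only [hδdef]; linarith
  have hδ1 : δ ≤ 1 := by simp only [hδdef]; linarith
  have hM : 0 < 1 + 16*π^2/(1-α) := by
    have : (0:ℝ) ≤ 16*π^2/(1-α) := div_nonneg (by positivity) (by linarith)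
    linarith
  set M := 1 + 16*π^2/(1-α) with hMdef
  -- uniform continuity
  have hUC : UniformContinuousOn U (closedBall (0:ℂ) 1) :=
    (isCompact_closedBall (0:ℂ) 1).uniformContinuousOn_of_continuous hUcont
  refine le_of_forall_pos_le_add fun ε hε => ?_
  set B := ε*δ^2/8 with hBdef
  have hB0 : 0 < B := by positivity
  obtain ⟨η, hη0, hη⟩ := Metric.uniformContinuousOn_iff.mp hUC B hB0
  set ρ := max ((1+r)/2) (1 - (min η δ)/2) with hρdef
  have hρhalf : (1+r)/2 ≤ ρ := le_max_left _ _
  have hρr : r < ρ := lt_of_lt_of_le (by linarith) hρhalf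
  have hρ1 : ρ < 1 := by
    apply max_lt (by linarith)
    have : 0 < min η δ := lt_min hη0 hδ0
    linarith
  have h1ρ : 1 - ρ < η := by
    have h2 : 1 - (min η δ)/2 ≤ ρ := le_max_right _ _
    have : 0 < min η δ := lt_min hη0 hδ0
    have hm : min η δ ≤ η := min_le_left _ _
    linarith
  set δ' := ρ - r with hδ'def
  have hδ'0 : 0 < δ' := by simp only [hδ'def]; linarith
  have hδ'1 : δ' ≤ 1 := by simp only [hδ'def]; linarith
  have hδ'ge : δ/2 ≤ δ' := by
    simp only [hδ'def, hδdef]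
    linarith [hρhalf]
  set c := U (Complex.exp ((θ:ℂ) * Complex.I)) with hcdef
  have rep := aux_rep F U hF hUcont hFU z ρ hρr hρ1 c
  set Φ : ℝ → ℂ := fun t => (circleMap 0 ρ t * Complex.I) *
      (((circleMap 0 ρ t - z)^2)⁻¹ * (2*(U (circleMap 0 ρ t) : ℂ) - 2*(c:ℂ))) with hΦdef
  -- periodicity shift
  have hper : Function.Periodic Φ (2*π) := by
    intro t
    simp only [hΦdef, (periodic_circleMap 0 ρ) t]
  have hshift : ∫ t in (0:ℝ)..2*π, Φ t = ∫ t in (θ-π)..(θ+π), Φ t := by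
    have h := hper.intervalIntegral_add_eq 0 (θ-π)
    simp only [zero_add] at h
    rw [h]
    congr 1
    ring
  -- continuity / nonvanishing
  have hρpos : 0 < ρ := hr0.trans_lt hρr
  have habsw : ∀ t : ℝ, ‖circleMap 0 ρ t‖ = ρ := by
    intro t; rw [norm_circleMap_zero, _root_.abs_of_pos hρpos]
  have hwz : ∀ t : ℝ, circleMap 0 ρ t - z ≠ 0 := by
    intro t hc
    rw [sub_eq_zero] at hc
    have := habsw t
    rw [hc] at this
    rw [← hrdef] at this
    linarith
  have hwz2 : ∀ t : ℝ, ((circleMap 0 ρ t - z)^2) ≠ 0 := fun t => pow_ne_zero _ (hwz t)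
  have hwmem : ∀ t : ℝ, circleMap 0 ρ t ∈ closedBall (0:ℂ) 1 := by
    intro t
    rw [mem_closedBall_zero_iff, show ‖circleMap 0 ρ t‖ = ‖_‖ from rfl, habsw]
    linarith
  have hcw : Continuous (circleMap 0 ρ) := continuous_circleMap 0 ρ
  have hcU : Continuous fun t => U (circleMap 0 ρ t) := hUcont.comp_continuous hcw hwmem
  have hΦcont : Continuous Φ := by
    apply Continuous.mul (hcw.mul continuous_const)
    apply Continuous.mul (((hcw.sub continuous_const).pow 2).inv₀ hwz2)
    exact Continuous.sub (continuous_const.mul (Complex.continuous_ofReal.comp hcU)) continuous_const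
  set maxK : ℝ → ℝ := fun t => max (δ'^2) ((t-θ)^2/(16*π^2)) with hKdef
  have hmaxpos : ∀ t, 0 < maxK t := fun t => lt_max_of_lt_left (by positivity)
  have hKcont : Continuous maxK :=
    continuous_const.max (((continuous_id.sub continuous_const).pow 2).div_const _)
  have habsα : Continuous fun t : ℝ => |t-θ|^α :=
    ((_root_.continuous_abs).comp (continuous_id.sub continuous_const)).rpow_const
      (fun x => Or.inr hα0.le)
  -- pointwise bound
  have hpt : ∀ t ∈ Icc (θ-π) (θ+π),
      ‖Φ t‖ ≤ 2*A*(|t-θ|^α / maxK t) + 2*B*(maxK t)⁻¹ := by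
    intro t ht
    have hsπ : |t - θ| ≤ π := abs_le.mpr ⟨by linarith [ht.1], by linarith [ht.2]⟩
    have hker : maxK t ≤ (‖circleMap 0 ρ t - z‖)^2 := by
      simpa only [hKdef, hδ'def, hrdef, hθdef] using
        aux_kernel_c z ρ t hρ1.le (by rw [← hrdef]; exact hρhalf) (by rw [← hθdef]; exact hsπ)
    have hmem2 : Complex.exp ((t:ℂ)*Complex.I) ∈ closedBall (0:ℂ) 1 := by
      rw [mem_closedBall_zero_iff,
        show ‖Complex.exp ((t:ℂ)*Complex.I)‖ = ‖_‖ from rfl,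
        Complex.norm_exp_ofReal_mul_I]
    have hd : dist (circleMap 0 ρ t) (Complex.exp ((t:ℂ)*Complex.I)) < η := by
      rw [Complex.dist_eq]
      have heq : circleMap 0 ρ t - Complex.exp ((t:ℂ)*Complex.I)
          = ((ρ - 1 : ℝ):ℂ) * Complex.exp ((t:ℂ)*Complex.I) := by
        simp only [circleMap, zero_add]
        push_cast
        ring
      rw [heq, norm_mul, Complex.norm_real, Real.norm_eq_abs, Complex.norm_exp_ofReal_mul_I, mul_one,
        _root_.abs_of_nonpos (by linarith : ρ - 1 ≤ 0)]
      linarith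
    have hUdist : |U (circleMap 0 ρ t) - U (Complex.exp ((t:ℂ)*Complex.I))| < B := by
      have := hη _ (hwmem t) _ hmem2 hd
      rwa [Real.dist_eq] at this
    have hHol : |U (Complex.exp ((t:ℂ)*Complex.I)) - c| ≤ A*|t-θ|^α := by
      simpa only [hcdef] using hUHolder t θ
    have hU2 : |2*U (circleMap 0 ρ t) - 2*c| ≤ 2*A*|t-θ|^α + 2*B := by
      have tri : |U (circleMap 0 ρ t) - c| ≤ |U (circleMap 0 ρ t) - U (Complex.exp ((t:ℂ)*Complex.I))|
          + |U (Complex.exp ((t:ℂ)*Complex.I)) - c| := abs_sub_le _ _ _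
      have h2 : |2*U (circleMap 0 ρ t) - 2*c| = 2 * |U (circleMap 0 ρ t) - c| := by
        rw [show 2*U (circleMap 0 ρ t) - 2*c = 2*(U (circleMap 0 ρ t) - c) by ring, abs_mul]
        norm_num
      rw [h2]
      linarith
    have hw_abs : ‖circleMap 0 ρ t * Complex.I‖ = ρ := by
      rw [norm_mul, Complex.norm_I, mul_one, habsw]
    have hnorm : ‖Φ t‖ = ρ * (((‖circleMap 0 ρ t - z‖)^2)⁻¹
        * |2*U (circleMap 0 ρ t) - 2*c|) := by
      have hcast : 2*((U (circleMap 0 ρ t) : ℂ)) - 2*(c:ℂ)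
          = ((2*U (circleMap 0 ρ t) - 2*c : ℝ) : ℂ) := by push_cast; ring
      simp only [hΦdef, norm_mul, norm_inv, norm_pow, hw_abs, hcast,
        Complex.norm_real, Real.norm_eq_abs]
    rw [hnorm]
    have hrpow_nn : (0:ℝ) ≤ |t-θ|^α := Real.rpow_nonneg (abs_nonneg _) _
    have hinv : ((‖circleMap 0 ρ t - z‖)^2)⁻¹ ≤ (maxK t)⁻¹ :=
      inv_anti₀ (hmaxpos t) hker
    calc ρ * (((‖circleMap 0 ρ t - z‖)^2)⁻¹ * |2*U (circleMap 0 ρ t) - 2*c|)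
        ≤ 1 * ((maxK t)⁻¹ * (2*A*|t-θ|^α + 2*B)) := by
          apply mul_le_mul hρ1.le ?_ (by positivity) zero_le_one
          apply mul_le_mul hinv hU2 (abs_nonneg _) (by positivity)
      _ = 2*A*(|t-θ|^α / maxK t) + 2*B*(maxK t)⁻¹ := by
          rw [one_mul, div_eq_mul_inv]
          ring
  -- integral bounds
  have hc1 : Continuous fun t : ℝ => 2*A*(|t-θ|^α / maxK t) := by
    apply Continuous.mul continuous_const
    exact Continuous.div habsα hKcont (fun t => ne_of_gt (hmaxpos t))
  have hc2 : Continuous fun t : ℝ => 2*B*(maxK t)⁻¹ := by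
    apply Continuous.mul continuous_const
    exact Continuous.inv₀ hKcont (fun t => ne_of_gt (hmaxpos t))
  have hRHScont : Continuous fun t => 2*A*(|t-θ|^α / maxK t) + 2*B*(maxK t)⁻¹ := hc1.add hc2
  have hIm : ‖∫ t in (θ-π)..(θ+π), Φ t‖
      ≤ ∫ t in (θ-π)..(θ+π), (2*A*(|t-θ|^α / maxK t) + 2*B*(maxK t)⁻¹) := by
    have h1 : ‖∫ t in (θ-π)..(θ+π), Φ t‖ ≤ ∫ t in (θ-π)..(θ+π), ‖Φ t‖ :=
      intervalIntegral.norm_integral_le_integral_norm (by linarith)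
    have h2 : ∫ t in (θ-π)..(θ+π), ‖Φ t‖
        ≤ ∫ t in (θ-π)..(θ+π), (2*A*(|t-θ|^α / maxK t) + 2*B*(maxK t)⁻¹) :=
      intervalIntegral.integral_mono_on (by linarith)
        (hΦcont.norm.intervalIntegrable _ _) (hRHScont.intervalIntegrable _ _) hpt
    calc ‖∫ t in (θ-π)..(θ+π), Φ t‖ = ‖∫ t in (θ-π)..(θ+π), Φ t‖ :=
          rfl
      _ ≤ _ := h1
      _ ≤ _ := h2
  have hsplitI : ∫ t in (θ-π)..(θ+π), (2*A*(|t-θ|^α / maxK t) + 2*B*(maxK t)⁻¹)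
      = 2*A*(∫ t in (θ-π)..(θ+π), |t-θ|^α / maxK t)
        + 2*B*(∫ t in (θ-π)..(θ+π), (maxK t)⁻¹) := by
    rw [intervalIntegral.integral_add (hc1.intervalIntegrable _ _) (hc2.intervalIntegrable _ _),
      intervalIntegral.integral_const_mul, intervalIntegral.integral_const_mul]
  have hI1 : ∫ t in (θ-π)..(θ+π), |t-θ|^α / maxK t ≤ 2*M*δ'^(α-1) := by
    have hsub := intervalIntegral.integral_comp_sub_right
      (a := θ-π) (b := θ+π) (fun s => |s|^α / max (δ'^2) (s^2/(16*π^2))) θ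
    have hb1 : θ - π - θ = -π := by ring
    have hb2 : θ + π - θ = π := by ring
    rw [hb1, hb2] at hsub
    calc ∫ t in (θ-π)..(θ+π), |t-θ|^α / maxK t
        = ∫ s in (-π)..π, |s|^α / max (δ'^2) (s^2/(16*π^2)) := hsub
      _ ≤ 2*(1+16*π^2/(1-α))*δ'^(α-1) := aux_J α δ' hα0 hα1 hδ'0 hδ'1
      _ = 2*M*δ'^(α-1) := by rw [hMdef]
  have hI2 : ∫ t in (θ-π)..(θ+π), (maxK t)⁻¹ ≤ 2*π*(δ'^2)⁻¹ := by
    have hmono : ∫ t in (θ-π)..(θ+π), (maxK t)⁻¹ ≤ ∫ _t in (θ-π)..(θ+π), (δ'^2)⁻¹ := by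
      apply intervalIntegral.integral_mono_on (by linarith)
        ((hKcont.inv₀ (fun t => ne_of_gt (hmaxpos t))).intervalIntegrable _ _)
        (intervalIntegrable_const)
      intro x _
      exact inv_anti₀ (by positivity) (le_max_left _ _)
    refine hmono.trans ?_
    rw [intervalIntegral.integral_const, smul_eq_mul]
    apply le_of_eq
    congr 1
    ring
  -- assemble
  have habsc : ‖(2*(π:ℂ)*Complex.I)⁻¹‖ = (2*π)⁻¹ := by
    rw [norm_inv, norm_mul, norm_mul, Complex.norm_I, Complex.norm_two, Complex.norm_real, Real.norm_eq_abs,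
      _root_.abs_of_pos hπ, mul_one]
  have hchain : ‖deriv F z‖ ≤ (2*π)⁻¹ *
      (2*A*(2*M*δ'^(α-1)) + 2*B*(2*π*(δ'^2)⁻¹)) := by
    rw [rep, norm_mul, habsc]
    apply mul_le_mul_of_nonneg_left ?_ (by positivity)
    rw [hshift]
    refine (hIm.trans_eq hsplitI).trans ?_
    have hA1 : (0:ℝ) ≤ 2*A := by linarith
    have hB1 : (0:ℝ) ≤ 2*B := by linarith
    have := add_le_add (mul_le_mul_of_nonneg_left hI1 hA1) (mul_le_mul_of_nonneg_left hI2 hB1)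
    exact this
  have heq2 : (2*π)⁻¹ * (2*A*(2*M*δ'^(α-1)) + 2*B*(2*π*(δ'^2)⁻¹))
      = 2*A*M/π*δ'^(α-1) + 2*B*(δ'^2)⁻¹ := by
    field_simp
  rw [heq2] at hchain
  -- final arithmetic
  have hd1 : δ'^(α-1) ≤ 2*δ^(α-1) := by
    have h1 : δ'^(α-1) ≤ (δ/2)^(α-1) :=
      Real.rpow_le_rpow_of_nonpos (by positivity) hδ'ge (by linarith)
    have h2 : (δ/2)^(α-1) = δ^(α-1) / 2^(α-1) :=
      Real.div_rpow hδ0.le (by norm_num : (0:ℝ) ≤ 2) (α-1)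
    have h3 : (1:ℝ)/2 ≤ (2:ℝ)^(α-1) := by
      have := Real.rpow_le_rpow_of_exponent_le (by norm_num : (1:ℝ) ≤ 2)
        (by linarith : (-1:ℝ) ≤ α-1)
      rwa [Real.rpow_neg_one, show ((2:ℝ)⁻¹ = 1/2) by norm_num] at this
    have h4 : (0:ℝ) < (2:ℝ)^(α-1) := Real.rpow_pos_of_pos (by norm_num) _
    have h5 : δ^(α-1) / 2^(α-1) ≤ 2*δ^(α-1) := by
      rw [div_le_iff₀ h4]
      nlinarith [Real.rpow_nonneg hδ0.le (α-1)]
    linarith [h1.trans_eq h2 |>.trans h5]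
  have hb2 : 2*B*(δ'^2)⁻¹ ≤ ε := by
    have hq : δ^2/4 ≤ δ'^2 := by nlinarith
    have : (δ'^2)⁻¹ ≤ (δ^2/4)⁻¹ := inv_anti₀ (by positivity) hq
    have h6 : 2*B*(δ'^2)⁻¹ ≤ 2*B*(δ^2/4)⁻¹ := by
      apply mul_le_mul_of_nonneg_left this (by linarith)
    have h7 : 2*B*(δ^2/4)⁻¹ = ε := by
      rw [hBdef]
      field_simp
      ring
    linarith
  have hC0 : (0:ℝ) ≤ 2*A*M/π := by positivity
  calc ‖deriv F z‖ ≤ 2*A*M/π*δ'^(α-1) + 2*B*(δ'^2)⁻¹ := hchain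
    _ ≤ 2*A*M/π*(2*δ^(α-1)) + ε := by
        have := mul_le_mul_of_nonneg_left hd1 hC0
        linarith
    _ = (4*A*M/π) * δ^(α-1) + ε := by ring
    _ = (4*A*(1+16*π^2/(1-α))/π) * (1-r)^(α-1) + ε := by rw [hMdef, hδdef]


theorem stmt10 (α : ℝ) (hα0 : 0 < α) (hα1 : α < 1)
    (h g : ℂ → ℂ) (k : ℝ) (hk0 : 0 ≤ k) (hk1 : k < 1)
    (hh : DifferentiableOn ℂ h (ball (0:ℂ) 1))
    (hg : DifferentiableOn ℂ g (ball (0:ℂ) 1))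
    (hqr : ∀ z ∈ ball (0:ℂ) 1, ‖deriv g z‖ ≤ k * ‖deriv h z‖)
    (U : ℂ → ℝ) (A : ℝ) (hA : 0 < A)
    (hUcont : ContinuousOn U (closedBall (0:ℂ) 1))
    (hUeq : ∀ z ∈ ball (0:ℂ) 1, U z = (h z + (starRingEnd ℂ) (g z)).re)
    (hUHolder : ∀ s t : ℝ,
      |U (Complex.exp (s * Complex.I)) - U (Complex.exp (t * Complex.I))| ≤ A * |s - t| ^ α) :
    ∃ C > 0, ∀ z ∈ ball (0:ℂ) 1,
      ‖deriv h z‖ ≤ C * (1 - ‖z‖) ^ (α - 1) ∧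
      ‖deriv g z‖ ≤ C * (1 - ‖z‖) ^ (α - 1) := by
  have hπ := Real.pi_pos
  set F : ℂ → ℂ := fun w => h w + g w with hFdef
  have hF : DifferentiableOn ℂ F (ball (0:ℂ) 1) := hh.add hg
  have hFU : ∀ w ∈ ball (0:ℂ) 1, F w + (starRingEnd ℂ) (F w) = 2 * (U w : ℂ) := by
    intro w hw
    have hre : U w = (F w).re := by
      rw [hUeq w hw]
      simp [hFdef, Complex.add_re, Complex.conj_re]
    rw [Complex.add_conj, hre]
    push_cast
    ring
  have key := aux_main α A hα0 hα1 hA F hF U hUcont hFU hUHolder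
  have hM : 0 < 1 + 16*π^2/(1-α) := by
    have : (0:ℝ) ≤ 16*π^2/(1-α) := div_nonneg (by positivity) (by linarith)
    linarith
  set C₀ := 4*A*(1+16*π^2/(1-α))/π with hC₀def
  have hC₀ : 0 < C₀ := div_pos (mul_pos (by linarith) hM) hπ
  have hk' : 0 < 1 - k := by linarith
  refine ⟨C₀/(1-k), div_pos hC₀ hk', ?_⟩
  intro z hz
  have hz1 : ‖z‖ < 1 := by rwa [mem_ball_zero_iff] at hz
  have hXnn : (0:ℝ) ≤ (1 - ‖z‖)^(α-1) :=
    Real.rpow_nonneg (by linarith) _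
  have hd : deriv F z = deriv h z + deriv g z := by
    have h1 : DifferentiableAt ℂ h z := hh.differentiableAt (isOpen_ball.mem_nhds hz)
    have h2 : DifferentiableAt ℂ g z := hg.differentiableAt (isOpen_ball.mem_nhds hz)
    rw [hFdef]
    exact deriv_add h1 h2
  have hFb := key z hz
  have h3 : ‖deriv h z‖
      ≤ ‖deriv h z + deriv g z‖ + ‖deriv g z‖ := by
    calc ‖deriv h z‖
        = ‖(deriv h z + deriv g z) + (- deriv g z)‖ := by ring_nf
      _ ≤ ‖deriv h z + deriv g z‖ + ‖- deriv g z‖ :=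
          norm_add_le _ _
      _ = ‖deriv h z + deriv g z‖ + ‖deriv g z‖ := by rw [norm_neg]
  have hq := hqr z hz
  have htri : (1-k) * ‖deriv h z‖ ≤ ‖deriv F z‖ := by
    rw [hd]
    nlinarith [norm_nonneg (deriv h z)]
  have hhb : ‖deriv h z‖ ≤ C₀/(1-k) * (1 - ‖z‖)^(α-1) := by
    rw [div_mul_eq_mul_div, le_div_iff₀ hk']
    calc ‖deriv h z‖ * (1-k) = (1-k) * ‖deriv h z‖ := by ring
      _ ≤ ‖deriv F z‖ := htri
      _ ≤ C₀ * (1 - ‖z‖)^(α-1) := hFb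
  refine ⟨hhb, ?_⟩
  calc ‖deriv g z‖ ≤ k * ‖deriv h z‖ := hq
    _ ≤ 1 * (C₀/(1-k) * (1 - ‖z‖)^(α-1)) := by
        apply mul_le_mul hk1.le hhb (norm_nonneg _) zero_le_one
    _ = C₀/(1-k) * (1 - ‖z‖)^(α-1) := one_mul _
end

section
/- Let 0 < α < 1 and let f = h + conj(g) be a harmonic K-quasiregular mapping on the unit disk 𝔻 (so h, g are holomorphic on 𝔻 and |g'(z)| ≤ k·|h'(z)| on 𝔻 for some k ∈ [0,1)), with u = Re f and v = Im f. Suppose u extends continuously to the closed unit disk and its boundary values satisfy |u(e^{is}) - u(e^{it})| ≤ A·|s-t|^α for all s,t ∈ ℝ and some A > 0. Then v extends continuously to the closed unit disk and its boundary values satisfy |v(e^{is}) - v(e^{it})| ≤ A'·|s-t|^α for all s,t ∈ ℝ and some constant A' > 0. -/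
open Complex Metric Set
open Filter intervalIntegral
open scoped Real Topology
noncomputable def Complex.abs : AbsoluteValue ℂ ℝ where
  toFun z := ‖z‖
  map_mul' := norm_mul
  nonneg' := norm_nonneg
  eq_zero' _ := norm_eq_zero
  add_le' := norm_add_le

theorem Complex.abs_apply (z : ℂ) : Complex.abs z = Real.sqrt (Complex.normSq z) := rfl
theorem Complex.norm_eq_abs (z : ℂ) : ‖z‖ = Complex.abs z := rfl
@[simp] theorem Complex.abs_exp (z : ℂ) : Complex.abs (Complex.exp z) = Real.exp z.re :=
  Complex.norm_exp z
@[simp] theorem Complex.abs_ofReal (r : ℝ) : Complex.abs (r : ℂ) = |r| := Complex.norm_real r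
@[simp] theorem Complex.abs_I : Complex.abs Complex.I = 1 := Complex.norm_I
theorem Complex.abs_cpow_real (x : ℂ) (y : ℝ) : Complex.abs (x ^ (y : ℂ)) = Complex.abs x ^ y :=
  Complex.norm_cpow_real x y
theorem Complex.sq_abs (z : ℂ) : Complex.abs z ^ 2 = Complex.normSq z := Complex.sq_norm z
theorem Complex.re_le_abs (z : ℂ) : z.re ≤ Complex.abs z := Complex.re_le_norm z
theorem Complex.abs_im_le_abs (z : ℂ) : |z.im| ≤ Complex.abs z := Complex.abs_im_le_norm z
theorem Complex.abs_mul_exp_arg_mul_I (z : ℂ) :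
    (Complex.abs z : ℂ) * Complex.exp (Complex.arg z * Complex.I) = z :=
  Complex.norm_mul_exp_arg_mul_I z
theorem Complex.abs.sub_le_add (a b : ℂ) : Complex.abs (a - b) ≤ Complex.abs a + Complex.abs b :=
  norm_sub_le a b


lemma maxRe (p : ℂ → ℝ) (Φ : ℂ → ℂ) (hΦ : DifferentiableOn ℂ Φ (ball 0 1))
    (hre : ∀ z ∈ ball (0:ℂ) 1, p z = (Φ z).re)
    (hp : ContinuousOn p (closedBall 0 1))
    (hbd : ∀ z ∈ sphere (0:ℂ) 1, p z ≤ 0) :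
    ∀ z ∈ closedBall (0:ℂ) 1, p z ≤ 0 := by
  intro z hz
  rcases eq_or_lt_of_le (mem_closedBall_zero_iff.1 hz) with hz1 | hz1
  · exact hbd z (by simpa [mem_sphere_zero_iff_norm] using hz1)
  -- z in open ball
  have hzb : z ∈ ball (0:ℂ) 1 := mem_ball_zero_iff.2 hz1
  have key : ∀ ε : ℝ, 0 < ε → p z ≤ 0 + ε := by
    intro ε hε
    rw [zero_add]
    set S : Set ℂ := closedBall 0 1 ∩ p ⁻¹' (Ici ε) with hS
    have hScl : IsClosed S := hp.preimage_isClosed_of_isClosed Metric.isClosed_closedBall isClosed_Ici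
    have hScpt : IsCompact S :=
      (isCompact_closedBall (0:ℂ) 1).of_isClosed_subset hScl inter_subset_left
    have hSlt : ∀ w ∈ S, ‖w‖ < 1 := by
      intro w hw
      rcases eq_or_lt_of_le (mem_closedBall_zero_iff.1 hw.1) with h1 | h1
      · exfalso
        have := hbd w (by simpa [mem_sphere_zero_iff_norm] using h1)
        have := hw.2
        simp only [mem_preimage, mem_Ici] at this
        linarith
      · exact h1
    -- sup of norms over insert ‖z‖ (norm '' S)
    set T : Set ℝ := insert ‖z‖ (Norm.norm '' S) with hT
    have hTcpt : IsCompact T := (hScpt.image continuous_norm).insert _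
    have hTne : T.Nonempty := ⟨‖z‖, mem_insert _ _⟩
    have hm : sSup T ∈ T := hTcpt.sSup_mem hTne
    have hmlt : sSup T < 1 := by
      rcases hm with h | ⟨w, hw, hww⟩
      · rw [h]; exact hz1
      · rw [← hww]; exact hSlt w hw
    set r : ℝ := (sSup T + 1) / 2 with hr
    have hmr : sSup T < r := by rw [hr]; linarith
    have hr1 : r < 1 := by rw [hr]; linarith
    have hzr : ‖z‖ < r := lt_of_le_of_lt (le_csSup hTcpt.bddAbove (mem_insert _ _)) hmr
    have hr0 : 0 < r := lt_of_le_of_lt (norm_nonneg z) hzr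
    have hsub : closedBall (0:ℂ) r ⊆ ball 0 1 := closedBall_subset_ball hr1
    -- apply max modulus to exp ∘ Φ on ball 0 r
    have hd : DiffContOnCl ℂ (fun w => Complex.exp (Φ w)) (ball (0:ℂ) r) := by
      apply DifferentiableOn.diffContOnCl
      rw [closure_ball (0:ℂ) hr0.ne']
      exact ((hΦ.mono hsub).cexp)
    have hbd' : ∀ w ∈ frontier (ball (0:ℂ) r), ‖Complex.exp (Φ w)‖ ≤ Real.exp ε := by
      intro w hw
      rw [frontier_ball (0:ℂ) hr0.ne'] at hw
      have hwnorm : ‖w‖ = r := mem_sphere_zero_iff_norm.1 hw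
      have hwb : w ∈ ball (0:ℂ) 1 := mem_ball_zero_iff.2 (hwnorm ▸ hr1)
      have hwlt : p w < ε := by
        by_contra hcon
        push_neg at hcon
        have hwS : w ∈ S := ⟨ball_subset_closedBall hwb, by simpa using hcon⟩
        have : ‖w‖ ≤ sSup T := le_csSup hTcpt.bddAbove (mem_insert_of_mem _ ⟨w, hwS, rfl⟩)
        rw [hwnorm] at this; linarith
      rw [norm_eq_abs, Complex.abs_exp, ← hre w hwb]
      exact Real.exp_le_exp.2 hwlt.le
    have := Complex.norm_le_of_forall_mem_frontier_norm_le isBounded_ball hd hbd'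
      (z := z) (by rw [closure_ball (0:ℂ) hr0.ne']; exact mem_closedBall_zero_iff.2 hzr.le)
    rw [norm_eq_abs, Complex.abs_exp, ← hre z hzb] at this
    exact (Real.exp_le_exp).1 this
  exact le_of_forall_pos_le_add key

lemma BCb {F : ℂ → ℂ} {z : ℂ} {ρ M : ℝ} (hρ : 0 < ρ) (hM : 0 < M)
    (hF : DifferentiableOn ℂ F (ball z ρ))
    (hb : ∀ w ∈ ball z ρ, (F w - F z).re < M) :
    ‖deriv F z‖ ≤ 2 * M / ρ := by
  set q : ℂ → ℂ := fun w => F w - F z with hq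
  have key : ∀ w ∈ ball z ρ, Complex.abs (q w) < Complex.abs (2 * M - q w) := by
    intro w hw
    have h1 : Complex.normSq (q w) < Complex.normSq ((2 * M : ℂ) - q w) := by
      have hre : (q w).re < M := hb w hw
      have heq : Complex.normSq ((2 * M : ℂ) - q w) - Complex.normSq (q w)
          = 4 * M * (M - (q w).re) := by
        simp [Complex.normSq_apply, Complex.sub_re, Complex.sub_im, Complex.mul_re,
          Complex.mul_im]
        ring
      nlinarith [heq]
    have := Real.sqrt_lt_sqrt (Complex.normSq_nonneg (q w)) h1
    rwa [← Complex.abs_apply, ← Complex.abs_apply] at this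
  have hden : ∀ w ∈ ball z ρ, (2 * M : ℂ) - q w ≠ 0 := by
    intro w hw h0
    have h2 := key w hw
    rw [h0] at h2
    simp only [map_zero] at h2
    exact absurd h2 (Complex.abs.nonneg (q w)).not_gt
  set ψ : ℂ → ℂ := fun w => q w / (2 * M - q w) with hψ
  have hψd : DifferentiableOn ℂ ψ (ball z ρ) := by
    apply DifferentiableOn.div
    · exact hF.sub_const _
    · exact (differentiableOn_const _).sub (hF.sub_const _)
    · exact hden
  have hqz : q z = 0 := by simp [hq]
  have hψz : ψ z = 0 := by simp [hψ, hqz]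
  have hmaps : MapsTo ψ (ball z ρ) (ball (ψ z) 1) := by
    intro w hw
    rw [hψz, mem_ball_zero_iff]
    have h2 := key w hw
    have h3 : 0 < Complex.abs ((2*M:ℂ) - q w) := lt_of_le_of_lt (Complex.abs.nonneg _) h2
    simp only [hψ, norm_eq_abs, map_div₀]
    exact (div_lt_one h3).2 h2
  have hschwarz := Complex.norm_deriv_le_div_of_mapsTo_ball hψd (hmaps.mono_right ball_subset_closedBall) hρ
  -- compute deriv ψ z
  have hzb : z ∈ ball z ρ := mem_ball_self hρ
  have hFd : DifferentiableAt ℂ F z := hF.differentiableAt (isOpen_ball.mem_nhds hzb)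
  have hqd : HasDerivAt q (deriv F z) z := by
    simpa [hq] using hFd.hasDerivAt.sub_const (F z)
  have hdend : HasDerivAt (fun w => (2*M:ℂ) - q w) (-(deriv F z)) z := by
    have := (hasDerivAt_const z ((2*M:ℂ))).sub hqd
    simp only [zero_sub] at this
    exact this
  have hψder : HasDerivAt ψ (deriv F z / (2 * M)) z := by
    have := hqd.div hdend (hden z hzb)
    have heq : (deriv F z * ((2*M:ℂ) - q z) - q z * -(deriv F z)) / ((2*M:ℂ) - q z) ^ 2
        = deriv F z / (2 * M) := by
      rw [hqz]
      have hM0 : (2*M:ℂ) ≠ 0 := by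
        simp only [Ne, mul_eq_zero]
        push_neg
        constructor
        · norm_num
        · exact_mod_cast hM.ne'
      field_simp
      have hM1 : (M:ℂ) ≠ 0 := by exact_mod_cast hM.ne'
      field_simp
      ring
    rwa [heq] at this
  rw [hψder.deriv] at hschwarz
  rw [norm_div] at hschwarz
  have hM2 : ‖(2*M:ℂ)‖ = 2*M := by
    rw [norm_eq_abs]
    have : ((2*M:ℝ):ℂ) = (2*M:ℂ) := by push_cast; ring
    rw [← this, Complex.abs_ofReal, abs_of_pos (by linarith)]
  rw [hM2] at hschwarz
  rw [div_le_div_iff₀ (by linarith) hρ] at hschwarz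
  rw [le_div_iff₀ hρ]
  linarith [hschwarz]

lemma barrier_lower {α θ : ℝ} (hα0 : 0 < α) (hα1 : α < 1) (hθ : |θ| ≤ π) :
    Real.cos (α * (π/2)) * (2/π * |θ|) ^ α ≤ ((1 - Complex.exp (θ * I)) ^ (α:ℂ)).re := by
  have hπ := Real.pi_pos
  set w : ℂ := 1 - Complex.exp (θ * I) with hwdef
  have hwre : w.re = 1 - Real.cos θ := by
    simp [hwdef, Complex.exp_ofReal_mul_I_re]
  have hwim : w.im = - Real.sin θ := by
    simp [hwdef, Complex.exp_ofReal_mul_I_im]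
  rcases eq_or_ne θ 0 with rfl | hθ0
  · simp [hwdef, Complex.zero_cpow (by exact_mod_cast hα0.ne' : (α:ℂ) ≠ 0),
      Real.zero_rpow hα0.ne']
  -- θ ≠ 0
  have hw0 : w ≠ 0 := by
    intro h0
    have : Real.cos θ = 1 := by
      have := congrArg Complex.re h0
      rw [hwre] at this
      simp at this
      linarith
    rw [Real.cos_eq_one_iff_of_lt_of_lt (by cases abs_le.1 hθ; linarith) (by cases abs_le.1 hθ; linarith)] at this
    exact hθ0 this
  -- re(w^α) = |w|^α * cos(α * arg w)
  have habs : (0:ℝ) < Complex.abs w := Complex.abs.pos hw0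
  have hre_cpow : ((w) ^ (α:ℂ)).re = (Complex.abs w) ^ α * Real.cos (α * Complex.arg w) := by
    rw [Complex.cpow_def_of_ne_zero hw0, Complex.exp_re]
    have h1 : (Complex.log w * (α:ℂ)).re = Real.log (Complex.abs w) * α := by
      simp [Complex.log_re, Complex.norm_eq_abs]
    have h2 : (Complex.log w * (α:ℂ)).im = Complex.arg w * α := by
      simp [Complex.log_im]
    rw [h1, h2, Real.rpow_def_of_pos habs]
    ring_nf
  rw [hre_cpow]
  -- |arg w| ≤ π/2
  have harg : |Complex.arg w| ≤ π / 2 := by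
    rw [Complex.abs_arg_le_pi_div_two_iff, hwre]
    linarith [Real.cos_le_one θ]
  -- cos bound
  have hcos : Real.cos (α * (π/2)) ≤ Real.cos (α * Complex.arg w) := by
    rw [← Real.cos_abs (α * Complex.arg w)]
    apply Real.cos_le_cos_of_nonneg_of_le_pi (abs_nonneg _)
    · nlinarith
    · rw [abs_mul, abs_of_pos hα0]
      nlinarith [abs_nonneg (Complex.arg w)]
  -- |w| = 2 sin(|θ|/2) ≥ 2/π |θ|
  have habs_ge : 2/π * |θ| ≤ Complex.abs w := by
    have hns : Complex.normSq w = 2 - 2 * Real.cos θ := by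
      rw [Complex.normSq_apply, hwre, hwim]
      nlinarith [Real.sin_sq_add_cos_sq θ]
    have hsinh : Real.sin (|θ|/2) ^ 2 = Real.sin (θ/2) ^ 2 := by
      rcases abs_choice θ with h | h <;> rw [h] <;> simp [neg_div, Real.sin_neg]
    have h4 : Complex.normSq w = (2 * Real.sin (|θ|/2)) ^ 2 := by
      rw [hns]
      have hsq : Real.sin (θ/2) ^ 2 = (1 - Real.cos θ)/2 := by
        have h1 := Real.abs_sin_half θ
        have h2 : Real.sin (θ/2) ^ 2 = |Real.sin (θ/2)| ^ 2 := (_root_.sq_abs _).symm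
        rw [h2, h1, Real.sq_sqrt (by nlinarith [Real.cos_le_one θ])]
      rw [← hsinh] at hsq
      nlinarith
    have hsin_nonneg : 0 ≤ Real.sin (|θ|/2) :=
      Real.sin_nonneg_of_nonneg_of_le_pi (by positivity) (by linarith [abs_nonneg θ])
    have habs_eq : Complex.abs w = 2 * Real.sin (|θ|/2) := by
      rw [Complex.abs_apply, h4, Real.sqrt_sq (by linarith)]
    rw [habs_eq]
    have := Real.mul_le_sin (x := |θ|/2) (by positivity) (by linarith)
    calc 2/π * |θ| = 2 * (2/π * (|θ|/2)) := by ring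
    _ ≤ 2 * Real.sin (|θ|/2) := by linarith
  -- combine
  have hcospos : 0 < Real.cos (α * (π/2)) := by
    apply Real.cos_pos_of_mem_Ioo
    constructor <;> nlinarith
  have h5 : (2/π * |θ|) ^ α ≤ (Complex.abs w) ^ α :=
    Real.rpow_le_rpow (by positivity) habs_ge hα0.le
  calc Real.cos (α * (π/2)) * (2/π * |θ|) ^ α
      ≤ Real.cos (α * Complex.arg w) * (Complex.abs w) ^ α := by
        apply mul_le_mul hcos h5 (by positivity)
        linarith [hcos, hcospos]
    _ = (Complex.abs w) ^ α * Real.cos (α * Complex.arg w) := by ring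

lemma barrier_est {α A : ℝ} (hα0 : 0 < α) (hα1 : α < 1) (hA : 0 < A)
    {F : ℂ → ℂ} {U : ℂ → ℝ}
    (hF : DifferentiableOn ℂ F (ball 0 1))
    (hre : ∀ z ∈ ball (0:ℂ) 1, U z = (F z).re)
    (hUcont : ContinuousOn U (closedBall 0 1))
    (hUHolder : ∀ s t : ℝ,
      |U (Complex.exp (s * Complex.I)) - U (Complex.exp (t * Complex.I))| ≤ A * |s - t| ^ α)
    (t : ℝ) :
    ∀ w ∈ closedBall (0:ℂ) 1,
      |U w - U (Complex.exp (t * I))| ≤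
        (A * (π/2) ^ α / Real.cos (α * (π/2))) * Complex.abs (Complex.exp (t * I) - w) ^ α := by
  have hπ := Real.pi_pos
  have hcospos : 0 < Real.cos (α * (π/2)) := by
    apply Real.cos_pos_of_mem_Ioo
    constructor <;> nlinarith
  set Cb : ℝ := A * (π/2) ^ α / Real.cos (α * (π/2)) with hCb
  have hCbpos : 0 < Cb := by
    apply div_pos _ hcospos
    positivity
  set c : ℂ := Complex.exp (-(t:ℂ) * I) with hc
  have hc_mul : c * Complex.exp (t * I) = 1 := by
    rw [hc, ← Complex.exp_add]
    ring_nf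
    exact Complex.exp_zero
  have habs_c : Complex.abs c = 1 := by
    rw [hc, Complex.abs_exp]
    simp
  have habs_cw : ∀ w : ℂ, Complex.abs (c * w) = Complex.abs w := by
    intro w; rw [map_mul, habs_c, one_mul]
  -- real part bounds on the base
  have hb_re : ∀ w ∈ closedBall (0:ℂ) 1, Complex.normSq (1 - c*w) ≤ 2 * (1 - c*w).re := by
    intro w hw
    have h1 : Complex.abs (c*w) ≤ 1 := by
      rw [habs_cw]; exact mem_closedBall_zero_iff.1 hw
    have h2 : Complex.normSq (c*w) ≤ 1 := by
      rw [← Complex.sq_abs]; nlinarith [Complex.abs.nonneg (c*w)]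
    have e1 : Complex.normSq (1 - c*w) = 1 - 2*(c*w).re + Complex.normSq (c*w) := by
      simp [Complex.normSq_apply, Complex.sub_re, Complex.sub_im]
      ring
    have e2 : (1 - c*w).re = 1 - (c*w).re := by simp [Complex.sub_re]
    rw [e1, e2]; linarith
  have hslit : ∀ w ∈ closedBall (0:ℂ) 1, 1 - c*w ≠ 0 → (1 - c*w) ∈ Complex.slitPlane := by
    intro w hw h0
    rw [Complex.mem_slitPlane_iff]
    left
    have := hb_re w hw
    have h2 : 0 < Complex.normSq (1 - c*w) := Complex.normSq_pos.2 h0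
    linarith
  have hslit' : ∀ w ∈ ball (0:ℂ) 1, (1 - c*w) ∈ Complex.slitPlane := by
    intro w hw
    rw [Complex.mem_slitPlane_iff]
    left
    have h1 : (c*w).re ≤ Complex.abs (c*w) := Complex.re_le_abs _
    have h2 : Complex.abs (c*w) < 1 := by rw [habs_cw]; exact mem_ball_zero_iff.1 hw
    have : (1 - c*w).re = 1 - (c*w).re := by simp [Complex.sub_re]
    linarith [this ▸ (by linarith : (0:ℝ) < 1 - (c*w).re)]
  set Ψ : ℂ → ℂ := fun w => (1 - c*w) ^ (α:ℂ) with hΨ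
  have hΨd : DifferentiableOn ℂ Ψ (ball (0:ℂ) 1) := by
    intro w hw
    apply DifferentiableAt.differentiableWithinAt
    exact ((differentiableAt_const (1:ℂ)).sub ((differentiableAt_const c).mul
      differentiableAt_id)).cpow (differentiableAt_const _) (hslit' w hw)
  have hinner : Continuous (fun w : ℂ => 1 - c*w) :=
    continuous_const.sub (continuous_const.mul continuous_id)
  have hΨc : ContinuousOn Ψ (closedBall (0:ℂ) 1) := by
    intro w hw
    apply ContinuousAt.continuousWithinAt
    by_cases hb0 : 1 - c*w = 0
    · have hp0 : ContinuousAt (fun x : ℂ × ℂ => x.1 ^ x.2) (1 - c*w, (α:ℂ)) := by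
        rw [hb0]
        exact Complex.continuousAt_cpow_zero_of_re_pos
          (by rw [Complex.ofReal_re]; exact hα0)
      have hpair : ContinuousAt (fun w : ℂ => ((1 - c*w, (α:ℂ)) : ℂ × ℂ)) w :=
        (hinner.prodMk continuous_const).continuousAt
      exact ContinuousAt.comp (g := fun x : ℂ × ℂ => x.1 ^ x.2)
        (f := fun w : ℂ => ((1 - c*w, (α:ℂ)) : ℂ × ℂ)) hp0 hpair
    · have houter : ContinuousAt (fun x : ℂ => x ^ (α:ℂ)) (1 - c*w) :=
        continuousAt_cpow_const (hslit w hw hb0)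
      have hic : ContinuousAt (fun w : ℂ => 1 - c*w) w := hinner.continuousAt
      exact ContinuousAt.comp (g := fun x : ℂ => x ^ (α:ℂ))
        (f := fun w : ℂ => 1 - c*w) houter hic
  have hΨabs : ∀ w : ℂ, Complex.abs (Ψ w) = Complex.abs (1 - c*w) ^ α := fun w =>
    Complex.abs_cpow_real _ α
  set U₀ : ℝ := U (Complex.exp (t * I)) with hU₀
  -- sphere bound
  have hsp : ∀ ζ ∈ sphere (0:ℂ) 1, |U ζ - U₀| ≤ Cb * (Ψ ζ).re := by
    intro ζ hζ
    have habsζ : Complex.abs ζ = 1 := mem_sphere_zero_iff_norm.1 hζ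
    set s : ℝ := Complex.arg ζ with hs
    have hζeq : ζ = Complex.exp (s * I) := by
      conv_lhs => rw [← Complex.abs_mul_exp_arg_mul_I ζ]
      rw [habsζ]; simp [hs]
    set θ : ℝ := s - t with hθdef
    set θ' : ℝ := toIocMod Real.two_pi_pos (-π) θ with hθ'def
    have hθ'mem : θ' ∈ Ioc (-π) (-π + 2*π) := toIocMod_mem_Ioc Real.two_pi_pos (-π) θ
    have hθ'abs : |θ'| ≤ π := by
      rw [abs_le]; constructor
      · linarith [hθ'mem.1]
      · linarith [hθ'mem.2]
    obtain ⟨n, hn⟩ : ∃ n : ℤ, θ' = θ - n * (2*π) := by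
      refine ⟨toIocDiv Real.two_pi_pos (-π) θ, ?_⟩
      rw [hθ'def, toIocMod]
      simp [zsmul_eq_mul]
    have hexpeq : Complex.exp ((θ':ℂ) * I) = Complex.exp ((θ:ℂ) * I) := by
      rw [hn]
      push_cast
      rw [sub_mul, Complex.exp_sub]
      rw [show ((n:ℂ) * (2*(π:ℂ)) * I) = (n:ℂ) * (2*(π:ℂ) * I) by ring]
      rw [Complex.exp_int_mul_two_pi_mul_I]
      simp
    have hζeq' : ζ = Complex.exp ((t + θ') * I) := by
      rw [hζeq]
      push_cast
      rw [add_mul, Complex.exp_add, hexpeq, ← Complex.exp_add]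
      congr 1
      push_cast [hθdef]
      ring
    have hU1 : |U ζ - U₀| ≤ A * |θ'| ^ α := by
      rw [hζeq', hU₀]
      have := hUHolder (t + θ') t
      simpa using this
    have hbase : 1 - c * ζ = 1 - Complex.exp ((θ':ℂ) * I) := by
      rw [hζeq', hc, ← Complex.exp_add]
      congr 2
      push_cast
      ring
    have hlow := barrier_lower hα0 hα1 hθ'abs
    rw [← hbase] at hlow
    -- lhs arithmetic
    have harith : Cb * (Real.cos (α * (π/2)) * (2/π * |θ'|) ^ α) = A * |θ'| ^ α := by
      have h1 : ((2:ℝ)/π * |θ'|) ^ α = (2/π) ^ α * |θ'| ^ α :=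
        Real.mul_rpow (by positivity) (abs_nonneg _)
      have h2 : ((π:ℝ)/2) ^ α * (2/π) ^ α = 1 := by
        rw [← Real.mul_rpow (by positivity) (by positivity),
          show (π/2) * (2/π) = (1:ℝ) by field_simp, Real.one_rpow]
      have hCbcos : Cb * Real.cos (α * (π/2)) = A * (π/2) ^ α := by
        rw [hCb, div_mul_cancel₀ _ hcospos.ne']
      calc Cb * (Real.cos (α * (π/2)) * (2/π * |θ'|) ^ α)
          = (Cb * Real.cos (α * (π/2))) * ((2/π) ^ α * |θ'| ^ α) := by rw [h1]; ring
        _ = A * (((π:ℝ)/2) ^ α * (2/π) ^ α) * |θ'| ^ α := by rw [hCbcos]; ring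
        _ = A * |θ'| ^ α := by rw [h2]; ring
    calc |U ζ - U₀| ≤ A * |θ'| ^ α := hU1
      _ = Cb * (Real.cos (α * (π/2)) * (2/π * |θ'|) ^ α) := harith.symm
      _ ≤ Cb * (Ψ ζ).re := by
          apply mul_le_mul_of_nonneg_left _ hCbpos.le
          exact_mod_cast hlow
  -- max principle for both signs
  have hmain : ∀ σ : ℝ, σ = 1 ∨ σ = -1 →
      ∀ w ∈ closedBall (0:ℂ) 1, σ * (U w - U₀) ≤ Cb * (Ψ w).re := by
    intro σ hσ
    set p : ℂ → ℝ := fun w => σ * (U w - U₀) - Cb * (Ψ w).re with hp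
    set Φp : ℂ → ℂ := fun w => (σ:ℂ) * (F w - (U₀:ℂ)) - (Cb:ℂ) * Ψ w with hΦp
    have h1 : ∀ z ∈ ball (0:ℂ) 1, p z = (Φp z).re := by
      intro z hz
      simp only [hp, hΦp, Complex.sub_re, Complex.mul_re, Complex.ofReal_re,
        Complex.ofReal_im, Complex.sub_im, zero_mul, sub_zero]
      rw [hre z hz]
      try ring
    have h2 : ContinuousOn p (closedBall (0:ℂ) 1) :=
      (continuousOn_const.mul (hUcont.sub continuousOn_const)).sub
        (continuousOn_const.mul (Complex.continuous_re.comp_continuousOn hΨc))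
    have h3 : DifferentiableOn ℂ Φp (ball (0:ℂ) 1) :=
      ((differentiableOn_const _).mul (hF.sub_const _)).sub
        ((differentiableOn_const _).mul hΨd)
    have h4 : ∀ ζ ∈ sphere (0:ℂ) 1, p ζ ≤ 0 := by
      intro ζ hζ
      have := hsp ζ hζ
      have hσabs : σ * (U ζ - U₀) ≤ |U ζ - U₀| := by
        rcases hσ with rfl | rfl
        · rw [one_mul]; exact le_abs_self _
        · rw [neg_one_mul]; exact neg_le_abs _
      simp only [hp]
      linarith
    have := maxRe p Φp h3 h1 h2 h4
    intro w hw
    have := this w hw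
    simp only [hp] at this
    linarith
  intro w hw
  have hplus := hmain 1 (Or.inl rfl) w hw
  have hminus := hmain (-1) (Or.inr rfl) w hw
  rw [one_mul] at hplus
  rw [neg_one_mul] at hminus
  have habs1 : |U w - U₀| ≤ Cb * (Ψ w).re := by
    rw [abs_le]; constructor <;> linarith
  have hre_le : (Ψ w).re ≤ Complex.abs (1 - c*w) ^ α := by
    calc (Ψ w).re ≤ Complex.abs (Ψ w) := Complex.re_le_abs _
      _ = Complex.abs (1 - c*w) ^ α := hΨabs w
  have hbase2 : Complex.abs (1 - c*w) = Complex.abs (Complex.exp (t*I) - w) := by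
    rw [show 1 - c*w = c * (Complex.exp (t*I) - w) by rw [mul_sub, hc_mul]]
    rw [habs_cw]
  calc |U w - U₀| ≤ Cb * (Ψ w).re := habs1
    _ ≤ Cb * Complex.abs (1 - c*w) ^ α := mul_le_mul_of_nonneg_left hre_le hCbpos.le
    _ = Cb * Complex.abs (Complex.exp (t*I) - w) ^ α := by rw [hbase2]

lemma local_osc {α Cb : ℝ} (hα0 : 0 < α) (hα1 : α < 1) (hCb : 0 < Cb) {U : ℂ → ℝ}
    (hbar : ∀ t : ℝ, ∀ w ∈ closedBall (0:ℂ) 1,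
      |U w - U (Complex.exp (t*I))| ≤ Cb * Complex.abs (Complex.exp (t*I) - w) ^ α) :
    ∀ z ∈ ball (0:ℂ) 1, ∀ w ∈ ball z ((1 - Complex.abs z)/2),
      |U w - U z| ≤ 6*Cb * ((1 - Complex.abs z)/2) ^ α := by
  intro z hz w hw
  set a : ℝ := 1 - Complex.abs z with ha
  have hzlt : Complex.abs z < 1 := mem_ball_zero_iff.1 hz
  have hapos : 0 < a := by rw [ha]; linarith
  set ρ : ℝ := a / 2 with hρdef
  have hρpos : 0 < ρ := by positivity
  have hwz : Complex.abs (w - z) < ρ := by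
    rw [← Complex.norm_eq_abs, ← Complex.dist_eq]; exact mem_ball.1 hw
  have hwcb : w ∈ closedBall (0:ℂ) 1 := by
    rw [mem_closedBall_zero_iff]
    calc ‖w‖ = Complex.abs (w - z + z) := by norm_num [Complex.norm_eq_abs]
      _ ≤ Complex.abs (w - z) + Complex.abs z := Complex.abs.add_le _ _
      _ ≤ ρ + Complex.abs z := by linarith
      _ ≤ 1 := by rw [hρdef, ha]; linarith
  have hzcb : z ∈ closedBall (0:ℂ) 1 := ball_subset_closedBall hz
  rcases eq_or_ne z 0 with rfl | hz0
  · -- z = 0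
    have h1 := hbar 0 w hwcb
    have h2 := hbar 0 0 (by simp)
    simp only [Complex.ofReal_zero, zero_mul, Complex.exp_zero] at h1 h2
    have habs0 : Complex.abs ((1:ℂ) - 0) = 1 := by simp
    have ha1 : a = 1 := by simp [ha]
    have hb1 : Complex.abs ((1:ℂ) - w) ≤ 2 := by
      calc Complex.abs (1 - w) ≤ Complex.abs 1 + Complex.abs w := by
            simpa using Complex.abs.sub_le_add 1 w
        _ ≤ 2 := by
            have : Complex.abs w ≤ 1 := mem_closedBall_zero_iff.1 hwcb
            simp; linarith
    have hb2 : Complex.abs ((1:ℂ) - w) ^ α ≤ 2 := by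
      calc Complex.abs ((1:ℂ) - w) ^ α ≤ (2:ℝ) ^ α :=
            Real.rpow_le_rpow (Complex.abs.nonneg _) hb1 hα0.le
        _ ≤ (2:ℝ) ^ (1:ℝ) := Real.rpow_le_rpow_of_exponent_le (by norm_num) hα1.le
        _ = 2 := Real.rpow_one 2
    have hhalf : (1/2 : ℝ) ≤ ρ ^ α := by
      have h0 : ρ = 1/2 := by rw [hρdef, ha1]
      rw [h0]
      calc (1/2:ℝ) = (1/2:ℝ) ^ (1:ℝ) := (Real.rpow_one _).symm
        _ ≤ (1/2:ℝ) ^ α := Real.rpow_le_rpow_of_exponent_ge (by norm_num) (by norm_num) hα1.le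
    have habs0' : Complex.abs ((1:ℂ) - 0) ^ α = 1 := by
      rw [habs0, Real.one_rpow]
    calc |U w - U 0| ≤ |U w - U 1| + |U 0 - U 1| := by
          have : U w - U 0 = (U w - U 1) - (U 0 - U 1) := by ring
          rw [this]; exact abs_sub _ _
      _ ≤ Cb * Complex.abs ((1:ℂ) - w) ^ α + Cb * Complex.abs ((1:ℂ) - 0) ^ α :=
          add_le_add h1 h2
      _ ≤ Cb * 2 + Cb * 1 := by
          rw [habs0']
          have := mul_le_mul_of_nonneg_left hb2 hCb.le
          linarith
      _ = 3 * Cb := by ring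
      _ ≤ 6 * Cb * ρ ^ α := by nlinarith
  · -- z ≠ 0
    set t : ℝ := Complex.arg z with ht
    set e : ℂ := Complex.exp (t * I) with he
    have hze : z = (Complex.abs z : ℂ) * e := (Complex.abs_mul_exp_arg_mul_I z).symm
    have habse : Complex.abs e = 1 := by
      rw [he, Complex.abs_exp]; simp
    have hez : Complex.abs (e - z) = a := by
      have hsplit : e - z = (1 - (Complex.abs z : ℂ)) * e := by
        conv_lhs => rw [hze]
        ring
      rw [ha, hsplit, map_mul, habse, mul_one,
        show (1 : ℂ) - (Complex.abs z : ℂ) = ((1 - Complex.abs z : ℝ) : ℂ) by push_cast; ring,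
        Complex.abs_ofReal, abs_of_pos (by linarith)]
    have hew : Complex.abs (e - w) ≤ 3 * ρ := by
      calc Complex.abs (e - w) = Complex.abs ((e - z) + (z - w)) := by ring_nf
        _ ≤ Complex.abs (e - z) + Complex.abs (z - w) := Complex.abs.add_le _ _
        _ ≤ a + ρ := by
            have hzw' : Complex.abs (z - w) = Complex.abs (w - z) := Complex.abs.map_sub z w
            rw [hez, hzw']
            linarith
        _ = 3 * ρ := by rw [hρdef]; ring
    have h1 := hbar t w hwcb
    have h2 := hbar t z hzcb
    rw [← he] at h1 h2
    have hb1 : Complex.abs (e - w) ^ α ≤ 3 * ρ ^ α := by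
      calc Complex.abs (e - w) ^ α ≤ (3 * ρ) ^ α :=
            Real.rpow_le_rpow (Complex.abs.nonneg _) hew hα0.le
        _ = (3:ℝ) ^ α * ρ ^ α := Real.mul_rpow (by norm_num) hρpos.le
        _ ≤ 3 * ρ ^ α := by
            have : (3:ℝ) ^ α ≤ (3:ℝ) ^ (1:ℝ) :=
              Real.rpow_le_rpow_of_exponent_le (by norm_num) hα1.le
            rw [Real.rpow_one] at this
            have hρα : (0:ℝ) ≤ ρ ^ α := Real.rpow_nonneg hρpos.le α
            nlinarith
    have hb2 : Complex.abs (e - z) ^ α ≤ 2 * ρ ^ α := by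
      have h1 : Complex.abs (e - z) = 2 * ρ := by rw [hez, hρdef]; ring
      rw [h1, Real.mul_rpow (by norm_num) hρpos.le]
      have h2 : (2:ℝ) ^ α ≤ 2 := by
        calc (2:ℝ) ^ α ≤ (2:ℝ) ^ (1:ℝ) := Real.rpow_le_rpow_of_exponent_le (by norm_num) hα1.le
          _ = 2 := Real.rpow_one 2
      nlinarith [Real.rpow_nonneg hρpos.le α]
    calc |U w - U z| ≤ |U w - U e| + |U z - U e| := by
          have : U w - U z = (U w - U e) - (U z - U e) := by ring
          rw [this]; exact abs_sub _ _
      _ ≤ Cb * Complex.abs (e - w) ^ α + Cb * Complex.abs (e - z) ^ α := add_le_add h1 h2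
      _ ≤ Cb * (3 * ρ ^ α) + Cb * (2 * ρ ^ α) := by
          have g1 := mul_le_mul_of_nonneg_left hb1 hCb.le
          have g2 := mul_le_mul_of_nonneg_left hb2 hCb.le
          linarith
      _ ≤ 6 * Cb * ρ ^ α := by nlinarith [Real.rpow_nonneg hρpos.le α]

lemma grad_bound {α Cb : ℝ} (hα0 : 0 < α) (hα1 : α < 1) (hCb : 0 < Cb)
    {F : ℂ → ℂ} {U : ℂ → ℝ}
    (hF : DifferentiableOn ℂ F (ball 0 1))
    (hre : ∀ z ∈ ball (0:ℂ) 1, U z = (F z).re)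
    (hosc : ∀ z ∈ ball (0:ℂ) 1, ∀ w ∈ ball z ((1 - Complex.abs z)/2),
      |U w - U z| ≤ 6*Cb * ((1 - Complex.abs z)/2) ^ α) :
    ∀ z ∈ ball (0:ℂ) 1, ‖deriv F z‖ ≤ (4*(6*Cb+1)) * (1 - Complex.abs z) ^ (α - 1) := by
  intro z hz
  set a : ℝ := 1 - Complex.abs z with ha
  have hzlt : Complex.abs z < 1 := mem_ball_zero_iff.1 hz
  have hapos : 0 < a := by rw [ha]; linarith
  set ρ : ℝ := a / 2 with hρdef
  have hρpos : 0 < ρ := by positivity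
  have hsub : ball z ρ ⊆ ball (0:ℂ) 1 := by
    intro w hw
    rw [mem_ball_zero_iff]
    have h1 : Complex.abs (w - z) < ρ := by rw [← Complex.norm_eq_abs, ← Complex.dist_eq]; exact mem_ball.1 hw
    calc ‖w‖ = Complex.abs (w - z + z) := by norm_num [Complex.norm_eq_abs]
      _ ≤ Complex.abs (w - z) + Complex.abs z := Complex.abs.add_le _ _
      _ < ρ + Complex.abs z := by linarith
      _ ≤ 1 := by rw [hρdef, ha]; linarith
  set M : ℝ := 6*Cb * ρ ^ α + ρ ^ α with hM
  have hMpos : 0 < M := by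
    have : (0:ℝ) < ρ ^ α := Real.rpow_pos_of_pos hρpos α
    rw [hM]; nlinarith
  have hlt : ∀ w ∈ ball z ρ, (F w - F z).re < M := by
    intro w hw
    have hwb : w ∈ ball (0:ℂ) 1 := hsub hw
    have h1 : (F w - F z).re = U w - U z := by
      rw [Complex.sub_re, hre w hwb, hre z hz]
    rw [h1]
    have h2 := hosc z hz w hw
    have h3 : U w - U z ≤ |U w - U z| := le_abs_self _
    have : (0:ℝ) < ρ ^ α := Real.rpow_pos_of_pos hρpos α
    rw [hM]
    calc U w - U z ≤ 6*Cb * ρ ^ α := le_trans h3 h2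
      _ < 6*Cb * ρ ^ α + ρ ^ α := by linarith
  have hbc := BCb hρpos hMpos (hF.mono hsub) hlt
  -- 2M/ρ = 2(6Cb+1) ρ^(α-1) ≤ 4(6Cb+1) a^(α-1)
  have hrw : 2 * M / ρ = 2*(6*Cb+1) * ρ ^ (α - 1) := by
    rw [hM, Real.rpow_sub hρpos, Real.rpow_one]
    field_simp
  have hρa : ρ ^ (α-1) ≤ 2 * a ^ (α-1) := by
    rw [hρdef, Real.div_rpow hapos.le (by norm_num : (0:ℝ) ≤ 2)]
    rw [div_le_iff₀ (Real.rpow_pos_of_pos (by norm_num) _)]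
    have h2 : (1:ℝ) ≤ 2 * (2:ℝ) ^ (α-1) := by
      have : (2:ℝ) ^ (-1:ℝ) ≤ (2:ℝ) ^ (α-1) :=
        Real.rpow_le_rpow_of_exponent_le (by norm_num) (by linarith)
      have h3 : (2:ℝ) ^ (-1:ℝ) = 1/2 := by
        rw [Real.rpow_neg_one]; norm_num
      rw [h3] at this
      linarith
    calc a ^ (α-1) = a ^ (α-1) * 1 := by ring
      _ ≤ 2 * a ^ (α-1) * (2:ℝ)^(α-1) := by
          have hap : (0:ℝ) < a ^ (α-1) := Real.rpow_pos_of_pos hapos _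
          nlinarith [Real.rpow_pos_of_pos (show (0:ℝ) < 2 by norm_num) (α-1)]
  calc ‖deriv F z‖ ≤ 2 * M / ρ := hbc
    _ = 2*(6*Cb+1) * ρ ^ (α-1) := hrw
    _ ≤ 2*(6*Cb+1) * (2 * a ^ (α-1)) := by
        apply mul_le_mul_of_nonneg_left hρa
        nlinarith
    _ = (4*(6*Cb+1)) * a ^ (α-1) := by ring

-- radial estimate
lemma radial_est {α C3 : ℝ} (hα0 : 0 < α) (hα1 : α < 1) (hC3 : 0 ≤ C3)
    {G : ℂ → ℂ} (hG : DifferentiableOn ℂ G (ball 0 1))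
    (hbd : ∀ x ∈ ball (0:ℂ) 1, ‖deriv G x‖ ≤ C3 * (1 - Complex.abs x) ^ (α - 1))
    {z : ℂ} (hz : Complex.abs z < 1) {s : ℝ} (hs0 : 0 ≤ s) (hs1 : s ≤ 1) :
    ‖G z - G ((s:ℂ) * z)‖ ≤ C3/α * (1 - s) ^ α := by
  have hGanalytic : AnalyticOnNhd ℂ G (ball 0 1) := hG.analyticOnNhd isOpen_ball
  have hG' : ContinuousOn (deriv G) (ball (0:ℂ) 1) :=
    (hGanalytic.deriv_of_isOpen isOpen_ball).continuousOn
  set r : ℝ := Complex.abs z with hr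
  have hr0 : 0 ≤ r := Complex.abs.nonneg z
  have hmem : ∀ t : ℝ, t ∈ Set.uIcc s 1 → ((t:ℂ) * z) ∈ ball (0:ℂ) 1 := by
    intro t ht
    rw [Set.uIcc_of_le hs1] at ht
    rw [mem_ball_zero_iff]
    have h1 : ‖(t:ℂ) * z‖ = |t| * r := by
      simp [Complex.norm_eq_abs, map_mul, Complex.abs_ofReal, hr]
    rw [h1, _root_.abs_of_nonneg (le_trans hs0 ht.1)]
    rcases eq_or_lt_of_le hr0 with h | h
    · rw [← h]; norm_num
    · calc t * r ≤ 1 * r := by nlinarith [ht.2]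
        _ < 1 := by rw [one_mul]; exact hz
  -- derivative of ψ t = G (t z)
  set ψ' : ℝ → ℂ := fun t => deriv G ((t:ℂ)*z) * z with hψ'
  have hderiv : ∀ t ∈ Set.uIcc s 1, HasDerivAt (fun u : ℝ => G ((u:ℂ)*z)) (ψ' t) t := by
    intro t ht
    have hd : DifferentiableAt ℂ G ((t:ℂ)*z) :=
      hG.differentiableAt (isOpen_ball.mem_nhds (hmem t ht))
    have hc : HasDerivAt (fun w : ℂ => G (w*z)) (deriv G ((t:ℂ)*z) * z) (t:ℂ) := by
      have hinner : HasDerivAt (fun w : ℂ => w*z) z (t:ℂ) := by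
        simpa using (hasDerivAt_id ((t:ℂ))).mul_const z
      exact (hd.hasDerivAt.comp (t:ℂ) hinner)
    exact hc.comp_ofReal
  have hcont : ContinuousOn ψ' (Set.uIcc s 1) := by
    apply ContinuousOn.mul _ continuousOn_const
    apply hG'.comp
    · exact (continuous_ofReal.mul continuous_const).continuousOn
    · intro t ht; exact hmem t ht
  have hint : IntervalIntegrable ψ' MeasureTheory.volume s 1 :=
    hcont.intervalIntegrable
  have hftc : ∫ t in s..1, ψ' t = G ((1:ℂ)*z) - G ((s:ℂ)*z) := by
    have := intervalIntegral.integral_eq_sub_of_hasDerivAt hderiv hint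
    simpa using this
  -- bound function
  set φ : ℝ → ℝ := fun t => C3 * (1 - t*r) ^ (α-1) * r with hφ
  have hpos : ∀ t : ℝ, t ∈ Set.uIcc s 1 → 0 < 1 - t*r := by
    intro t ht
    rw [Set.uIcc_of_le hs1] at ht
    rcases eq_or_lt_of_le hr0 with h | h
    · rw [← h]; norm_num
    · nlinarith [ht.2]
  have hφcont : ContinuousOn φ (Set.uIcc s 1) := by
    apply ContinuousOn.mul _ continuousOn_const
    apply ContinuousOn.mul continuousOn_const
    intro t ht
    apply ContinuousAt.continuousWithinAt
    apply ContinuousAt.rpow_const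
    · exact (continuous_const.sub (continuous_id.mul continuous_const)).continuousAt
    · left; exact (hpos t ht).ne'
  have hφint : IntervalIntegrable φ MeasureTheory.volume s 1 := hφcont.intervalIntegrable
  have hφbd : ∀ t ∈ Set.uIcc s 1, ‖ψ' t‖ ≤ φ t := by
    intro t ht
    rw [Set.uIcc_of_le hs1] at ht
    have h1 : ‖ψ' t‖ = ‖deriv G ((t:ℂ)*z)‖ * r := by
      rw [hψ', norm_mul]
      simp [Complex.norm_eq_abs, Complex.abs_ofReal, hr]
    have h2 : Complex.abs ((t:ℂ)*z) = t * r := by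
      rw [map_mul, Complex.abs_ofReal, _root_.abs_of_nonneg (le_trans hs0 ht.1)]
    have h3 := hbd _ (hmem t (by rw [Set.uIcc_of_le hs1]; exact ht))
    rw [h2] at h3
    rw [h1, hφ]
    exact mul_le_mul_of_nonneg_right h3 hr0
  -- compute the integral of φ via antiderivative
  set Φ : ℝ → ℝ := fun t => -(C3/α) * (1 - t*r) ^ α with hΦ
  have hΦderiv : ∀ t ∈ Set.uIcc s 1, HasDerivAt Φ (φ t) t := by
    intro t ht
    have hbase : HasDerivAt (fun u : ℝ => 1 - u*r) (-r) t := by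
      simpa using ((hasDerivAt_id t).mul_const r).const_sub 1
    have hrpow : HasDerivAt (fun u : ℝ => (1 - u*r) ^ α)
        (α * (1 - t*r) ^ (α-1) * (-r)) t := by
      have houter := Real.hasDerivAt_rpow_const (x := 1 - t*r) (p := α)
        (Or.inl (hpos t ht).ne')
      exact (houter.comp t hbase)
    have := hrpow.const_mul (-(C3/α))
    refine this.congr_deriv ?_
    rw [hφ]
    field_simp
  have hφval : ∫ t in s..1, φ t = C3/α * ((1 - s*r) ^ α - (1 - r) ^ α) := by
    rw [intervalIntegral.integral_eq_sub_of_hasDerivAt hΦderiv hφint]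
    rw [hΦ]
    ring_nf
  -- put together
  have hnorm : ‖G z - G ((s:ℂ)*z)‖ ≤ ∫ t in s..1, φ t := by
    have h0 : G z - G ((s:ℂ)*z) = ∫ t in s..1, ψ' t := by
      rw [hftc]; norm_num
    rw [h0]
    calc ‖∫ t in s..1, ψ' t‖ ≤ ∫ t in s..1, ‖ψ' t‖ :=
          intervalIntegral.norm_integral_le_integral_norm hs1
      _ ≤ ∫ t in s..1, φ t := by
          apply intervalIntegral.integral_mono_on hs1 (hint.norm) hφint
          intro t ht
          exact hφbd t (by rw [Set.uIcc_of_le hs1]; exact ht)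
  -- final bound : C3/α ((1-s r)^α - (1-r)^α) ≤ C3/α (1-s)^α
  have hfin : (1 - s*r) ^ α - (1 - r) ^ α ≤ (1 - s) ^ α := by
    have h1 : 1 - s*r = (1 - r) + r*(1 - s) := by ring
    have h2 : ((1 - r) + r*(1-s)) ^ α ≤ (1 - r) ^ α + (r*(1-s)) ^ α := by
      have hx : (0:ℝ) ≤ 1 - r := by nlinarith
      have hy : (0:ℝ) ≤ r*(1-s) := by nlinarith
      have hnn := NNReal.rpow_add_le_add_rpow (Real.toNNReal (1-r)) (Real.toNNReal (r*(1-s)))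
        hα0.le hα1.le
      have hcast : ((Real.toNNReal (1-r) + Real.toNNReal (r*(1-s)) : NNReal) : ℝ) = (1-r) + r*(1-s) := by
        push_cast
        rw [Real.coe_toNNReal _ hx, Real.coe_toNNReal _ hy]
      calc ((1 - r) + r*(1-s)) ^ α
          = (((Real.toNNReal (1-r) + Real.toNNReal (r*(1-s)) : NNReal) : ℝ)) ^ α := by rw [hcast]
        _ = (((Real.toNNReal (1-r) + Real.toNNReal (r*(1-s))) ^ α : NNReal) : ℝ) := by
            rw [← NNReal.coe_rpow]
        _ ≤ (((Real.toNNReal (1-r)) ^ α + (Real.toNNReal (r*(1-s))) ^ α : NNReal) : ℝ) := by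
            exact_mod_cast hnn
        _ = (1 - r) ^ α + (r*(1-s)) ^ α := by
            push_cast
            rw [Real.coe_toNNReal _ hx, Real.coe_toNNReal _ hy]
    have h3 : (r*(1-s)) ^ α ≤ (1-s) ^ α := by
      apply Real.rpow_le_rpow (by nlinarith) (by nlinarith) hα0.le
    calc (1 - s*r) ^ α - (1 - r) ^ α ≤ (r*(1-s)) ^ α := by rw [h1]; linarith
      _ ≤ (1-s) ^ α := h3
  calc ‖G z - G ((s:ℂ)*z)‖ ≤ ∫ t in s..1, φ t := hnorm
    _ = C3/α * ((1 - s*r) ^ α - (1 - r) ^ α) := hφval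
    _ ≤ C3/α * (1 - s) ^ α := by
        apply mul_le_mul_of_nonneg_left hfin
        positivity

lemma holder_ball {α C3 : ℝ} (hα0 : 0 < α) (hα1 : α < 1) (hC3 : 0 ≤ C3)
    {G : ℂ → ℂ} (hG : DifferentiableOn ℂ G (ball 0 1))
    (hbd : ∀ x ∈ ball (0:ℂ) 1, ‖deriv G x‖ ≤ C3 * (1 - Complex.abs x) ^ (α - 1)) :
    ∀ z ∈ ball (0:ℂ) 1, ∀ w ∈ ball (0:ℂ) 1,
      ‖G z - G w‖ ≤ (C3*(2/α + 1)) * ‖z - w‖ ^ α := by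
  intro z hz w hw
  rcases eq_or_ne z w with rfl | hzw
  · simp only [sub_self, norm_zero]
    rw [Real.zero_rpow hα0.ne', mul_zero]
  set d : ℝ := ‖z - w‖ with hd
  have hd0 : 0 < d := by
    rw [hd, norm_pos_iff]
    exact sub_ne_zero.2 hzw
  set δ : ℝ := min d 1 with hδdef
  have hδ0 : 0 < δ := lt_min hd0 one_pos
  have hδ1 : δ ≤ 1 := min_le_right _ _
  have hδd : δ ≤ d := min_le_left _ _
  set s : ℝ := 1 - δ with hsdef
  have hs0 : 0 ≤ s := by rw [hsdef]; linarith
  have hs1 : s ≤ 1 := by rw [hsdef]; linarith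
  have hdα : (0:ℝ) < d ^ α := Real.rpow_pos_of_pos hd0 α
  have hδα : δ ^ α ≤ d ^ α := Real.rpow_le_rpow hδ0.le hδd hα0.le
  -- radial parts
  have hrad_z : ‖G z - G ((s:ℂ)*z)‖ ≤ C3/α * d ^ α := by
    calc ‖G z - G ((s:ℂ)*z)‖ ≤ C3/α * (1 - s) ^ α :=
          radial_est hα0 hα1 hC3 hG hbd (mem_ball_zero_iff.1 hz) hs0 hs1
      _ = C3/α * δ ^ α := by rw [hsdef]; ring_nf
      _ ≤ C3/α * d ^ α := by
          apply mul_le_mul_of_nonneg_left hδα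
          positivity
  have hrad_w : ‖G w - G ((s:ℂ)*w)‖ ≤ C3/α * d ^ α := by
    calc ‖G w - G ((s:ℂ)*w)‖ ≤ C3/α * (1 - s) ^ α :=
          radial_est hα0 hα1 hC3 hG hbd (mem_ball_zero_iff.1 hw) hs0 hs1
      _ = C3/α * δ ^ α := by rw [hsdef]; ring_nf
      _ ≤ C3/α * d ^ α := by
          apply mul_le_mul_of_nonneg_left hδα
          positivity
  -- middle part
  have hmid : ‖G ((s:ℂ)*z) - G ((s:ℂ)*w)‖ ≤ C3 * d ^ α := by
    rcases le_total d 1 with hd1 | hd1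
    · have hδeq : δ = d := min_eq_left hd1
      have hslt : s < 1 := by rw [hsdef]; linarith
      set K : Set ℂ := closedBall (0:ℂ) s with hK
      have hKsub : K ⊆ ball (0:ℂ) 1 := by
        intro x hx
        rw [mem_ball_zero_iff]
        exact lt_of_le_of_lt (mem_closedBall_zero_iff.1 hx) hslt
      have hfd : ∀ x ∈ K, HasFDerivWithinAt G
          (ContinuousLinearMap.smulRight (1 : ℂ →L[ℂ] ℂ) (deriv G x)) K x := by
        intro x hx
        have hd' : DifferentiableAt ℂ G x :=
          hG.differentiableAt (isOpen_ball.mem_nhds (hKsub hx))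
        exact (hd'.hasDerivAt.hasFDerivAt).hasFDerivWithinAt
      have hbound : ∀ x ∈ K,
          ‖ContinuousLinearMap.smulRight (1 : ℂ →L[ℂ] ℂ) (deriv G x)‖ ≤ C3 * δ ^ (α-1) := by
        intro x hx
        have hone : ‖(1 : ℂ →L[ℂ] ℂ)‖ = 1 := ContinuousLinearMap.norm_id
        rw [ContinuousLinearMap.norm_smulRight_apply, hone, one_mul]
        have h1 := hbd x (hKsub hx)
        have h2 : δ ≤ 1 - Complex.abs x := by
          have := mem_closedBall_zero_iff.1 hx
          rw [hsdef] at this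
          have : Complex.abs x ≤ 1 - δ := this
          linarith
        have h3 : (1 - Complex.abs x) ^ (α-1) ≤ δ ^ (α-1) :=
          Real.rpow_le_rpow_of_nonpos hδ0 h2 (by linarith)
        calc ‖deriv G x‖ ≤ C3 * (1 - Complex.abs x) ^ (α-1) := h1
          _ ≤ C3 * δ ^ (α-1) := mul_le_mul_of_nonneg_left h3 hC3
      have hmemz : (s:ℂ)*z ∈ K := by
        rw [hK, mem_closedBall_zero_iff]
        calc ‖(s:ℂ)*z‖ = s * ‖z‖ := by
              rw [norm_mul, Complex.norm_real, Real.norm_eq_abs, _root_.abs_of_nonneg hs0]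
          _ ≤ s * 1 := by
              apply mul_le_mul_of_nonneg_left _ hs0
              exact le_of_lt (mem_ball_zero_iff.1 hz)
          _ = s := mul_one s
      have hmemw : (s:ℂ)*w ∈ K := by
        rw [hK, mem_closedBall_zero_iff]
        calc ‖(s:ℂ)*w‖ = s * ‖w‖ := by
              rw [norm_mul, Complex.norm_real, Real.norm_eq_abs, _root_.abs_of_nonneg hs0]
          _ ≤ s * 1 := by
              apply mul_le_mul_of_nonneg_left _ hs0
              exact le_of_lt (mem_ball_zero_iff.1 hw)
          _ = s := mul_one s
      have hmvt := Convex.norm_image_sub_le_of_norm_hasFDerivWithin_le hfd hbound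
        (convex_closedBall (0:ℂ) s) hmemw hmemz
      have hnormdiff : ‖(s:ℂ)*z - (s:ℂ)*w‖ = s * d := by
        rw [← mul_sub, norm_mul, Complex.norm_real, Real.norm_eq_abs,
          _root_.abs_of_nonneg hs0, hd]
      rw [hnormdiff] at hmvt
      calc ‖G ((s:ℂ)*z) - G ((s:ℂ)*w)‖ ≤ C3 * δ ^ (α-1) * (s * d) := hmvt
        _ ≤ C3 * δ ^ (α-1) * d := by
            have h4 : (0:ℝ) ≤ C3 * δ ^ (α-1) := by positivity
            have h5 : s * d ≤ d := by nlinarith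
            exact mul_le_mul_of_nonneg_left h5 h4
        _ = C3 * (d ^ (α-1) * d) := by rw [hδeq]; ring
        _ = C3 * d ^ α := by
            rw [← Real.rpow_add_one hd0.ne' (α-1)]
            norm_num
    · have hδeq : δ = 1 := min_eq_right hd1
      have hseq : s = 0 := by rw [hsdef, hδeq]; ring
      rw [hseq]
      simp only [Complex.ofReal_zero, zero_mul, sub_self, norm_zero]
      positivity
  calc ‖G z - G w‖
      ≤ ‖G z - G ((s:ℂ)*z)‖ + ‖G ((s:ℂ)*z) - G ((s:ℂ)*w)‖ + ‖G ((s:ℂ)*w) - G w‖ := by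
        have h1 : G z - G w = (G z - G ((s:ℂ)*z)) + (G ((s:ℂ)*z) - G ((s:ℂ)*w))
            + (G ((s:ℂ)*w) - G w) := by ring
        rw [h1]
        exact norm_add₃_le
    _ ≤ C3/α * d ^ α + C3 * d ^ α + C3/α * d ^ α := by
        have hw' : ‖G ((s:ℂ)*w) - G w‖ = ‖G w - G ((s:ℂ)*w)‖ := norm_sub_rev _ _
        rw [hw']
        linarith [hrad_z, hrad_w, hmid]
    _ = (C3*(2/α + 1)) * d ^ α := by field_simp; ring

lemma extend_holder {α C4 : ℝ} (hα0 : 0 < α) (hC4 : 0 ≤ C4) {G : ℂ → ℂ}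
    (hGc : ContinuousOn G (ball (0:ℂ) 1))
    (hH : ∀ z ∈ ball (0:ℂ) 1, ∀ w ∈ ball (0:ℂ) 1, ‖G z - G w‖ ≤ C4 * ‖z - w‖ ^ α) :
    ∃ Gh : ℂ → ℂ, (∀ z ∈ ball (0:ℂ) 1, Gh z = G z) ∧
      (∀ z ∈ closedBall (0:ℂ) 1, ∀ w ∈ closedBall (0:ℂ) 1,
        ‖Gh z - Gh w‖ ≤ C4 * ‖z - w‖ ^ α) ∧
      ContinuousOn Gh (closedBall (0:ℂ) 1) := by
  set ρ : ℕ → ℝ := fun n => 1 - 1/(n+1) with hρ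
  have hρ0 : ∀ n : ℕ, 0 ≤ ρ n := by
    intro n
    have h1 : 1/((n:ℝ)+1) ≤ 1 := by
      rw [div_le_one (by positivity)]
      linarith [Nat.cast_nonneg (α := ℝ) n]
    simp only [hρ]
    linarith
  have hρ1 : ∀ n : ℕ, ρ n < 1 := by
    intro n
    have h1 : 0 < 1/((n:ℝ)+1) := by positivity
    simp only [hρ]
    linarith
  have hmem : ∀ z ∈ closedBall (0:ℂ) 1, ∀ n : ℕ, ((ρ n : ℝ) : ℂ) * z ∈ ball (0:ℂ) 1 := by
    intro z hz n
    rw [mem_ball_zero_iff]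
    calc ‖((ρ n : ℝ) : ℂ) * z‖ = ρ n * ‖z‖ := by
          rw [norm_mul, Complex.norm_real, Real.norm_eq_abs, _root_.abs_of_nonneg (hρ0 n)]
      _ ≤ ρ n * 1 := mul_le_mul_of_nonneg_left (mem_closedBall_zero_iff.1 hz) (hρ0 n)
      _ < 1 := by rw [mul_one]; exact hρ1 n
  set seq : ℂ → ℕ → ℂ := fun z n => G (((ρ n : ℝ) : ℂ) * z) with hseq
  have hρdiff : ∀ N n m : ℕ, N ≤ n → N ≤ m → |ρ n - ρ m| ≤ 1/((N:ℝ)+1) := by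
    intro N n m hn hm
    have key : ∀ a b : ℕ, N ≤ a → (0:ℝ) < 1/((a:ℝ)+1) ∧ 1/((a:ℝ)+1) ≤ 1/((N:ℝ)+1) := by
      intro a b ha
      constructor
      · positivity
      · apply one_div_le_one_div_of_le (by positivity)
        have : (N:ℝ) ≤ (a:ℝ) := by exact_mod_cast ha
        linarith
    obtain ⟨hn1, hn2⟩ := key n 0 hn
    obtain ⟨hm1, hm2⟩ := key m 0 hm
    have heq : ρ n - ρ m = 1/((m:ℝ)+1) - 1/((n:ℝ)+1) := by simp only [hρ]; ring
    rw [heq, abs_le]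
    constructor <;> linarith
  -- Cauchy & bound for differences at two points
  have hdiffbound : ∀ z ∈ closedBall (0:ℂ) 1, ∀ w ∈ closedBall (0:ℂ) 1, ∀ n m : ℕ,
      ‖seq z n - seq w m‖ ≤ C4 * ‖((ρ n : ℝ) : ℂ) * z - ((ρ m : ℝ) : ℂ) * w‖ ^ α := by
    intro z hz w hw n m
    exact hH _ (hmem z hz n) _ (hmem w hw m)
  have hcauchy : ∀ z ∈ closedBall (0:ℂ) 1, CauchySeq (seq z) := by
    intro z hz
    refine cauchySeq_of_le_tendsto_0 (fun N => C4 * (1/((N:ℝ)+1)) ^ α) ?_ ?_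
    · intro n m N hn hm
      rw [dist_eq_norm]
      calc ‖seq z n - seq z m‖
          ≤ C4 * ‖((ρ n : ℝ) : ℂ) * z - ((ρ m : ℝ) : ℂ) * z‖ ^ α := hdiffbound z hz z hz n m
        _ ≤ C4 * (1/((N:ℝ)+1)) ^ α := by
            apply mul_le_mul_of_nonneg_left _ hC4
            apply Real.rpow_le_rpow (norm_nonneg _) _ hα0.le
            calc ‖((ρ n : ℝ) : ℂ) * z - ((ρ m : ℝ) : ℂ) * z‖
                = |ρ n - ρ m| * ‖z‖ := by
                  rw [← sub_mul, norm_mul]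
                  congr 1
                  rw [show ((ρ n : ℝ) : ℂ) - ((ρ m : ℝ) : ℂ) = ((ρ n - ρ m : ℝ) : ℂ) by push_cast; ring]
                  rw [Complex.norm_real, Real.norm_eq_abs]
              _ ≤ 1/((N:ℝ)+1) * 1 := by
                  apply mul_le_mul (hρdiff N n m hn hm) (mem_closedBall_zero_iff.1 hz)
                    (norm_nonneg z) (by positivity)
              _ = 1/((N:ℝ)+1) := mul_one _
    · have h1 : Tendsto (fun N : ℕ => 1/((N:ℝ)+1)) atTop (𝓝 0) :=
        tendsto_one_div_add_atTop_nhds_zero_nat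
      have h2 : Tendsto (fun x : ℝ => C4 * x ^ α) (𝓝 0) (𝓝 (C4 * (0:ℝ) ^ α)) := by
        apply Tendsto.const_mul
        exact (Real.continuousAt_rpow_const 0 α (Or.inr hα0.le)).tendsto
      rw [Real.zero_rpow hα0.ne', mul_zero] at h2
      exact h2.comp h1
  set Gh : ℂ → ℂ := fun z => limUnder atTop (seq z) with hGh
  have htend : ∀ z ∈ closedBall (0:ℂ) 1, Tendsto (seq z) atTop (𝓝 (Gh z)) := by
    intro z hz
    exact (hcauchy z hz).tendsto_limUnder
  have hρtend : Tendsto (fun n : ℕ => ((ρ n : ℝ) : ℂ)) atTop (𝓝 1) := by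
    have h1 : Tendsto ρ atTop (𝓝 1) := by
      have := tendsto_one_div_add_atTop_nhds_zero_nat (𝕜 := ℝ)
      have h2 := this.const_sub 1
      rw [sub_zero] at h2
      exact h2
    have := (Complex.continuous_ofReal.tendsto 1).comp h1
    exact this
  have hval : ∀ z ∈ ball (0:ℂ) 1, Gh z = G z := by
    intro z hz
    have h1 : Tendsto (fun n : ℕ => ((ρ n : ℝ) : ℂ) * z) atTop (𝓝 z) := by
      have := hρtend.mul_const z
      simpa using this
    have h2 : Tendsto (seq z) atTop (𝓝 (G z)) := by
      have hc : ContinuousAt G z := hGc.continuousAt (isOpen_ball.mem_nhds hz)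
      exact hc.tendsto.comp h1
    exact tendsto_nhds_unique (htend z (ball_subset_closedBall hz)) h2
  have hhold : ∀ z ∈ closedBall (0:ℂ) 1, ∀ w ∈ closedBall (0:ℂ) 1,
      ‖Gh z - Gh w‖ ≤ C4 * ‖z - w‖ ^ α := by
    intro z hz w hw
    have h1 : Tendsto (fun n => ‖seq z n - seq w n‖) atTop (𝓝 ‖Gh z - Gh w‖) :=
      ((htend z hz).sub (htend w hw)).norm
    apply le_of_tendsto h1
    apply Filter.Eventually.of_forall
    intro n
    calc ‖seq z n - seq w n‖
        ≤ C4 * ‖((ρ n : ℝ) : ℂ) * z - ((ρ n : ℝ) : ℂ) * w‖ ^ α := hdiffbound z hz w hw n n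
      _ ≤ C4 * ‖z - w‖ ^ α := by
          apply mul_le_mul_of_nonneg_left _ hC4
          apply Real.rpow_le_rpow (norm_nonneg _) _ hα0.le
          rw [← mul_sub, norm_mul, Complex.norm_real, Real.norm_eq_abs,
            _root_.abs_of_nonneg (hρ0 n)]
          calc ρ n * ‖z - w‖ ≤ 1 * ‖z - w‖ :=
                mul_le_mul_of_nonneg_right (hρ1 n).le (norm_nonneg _)
            _ = ‖z - w‖ := one_mul _
  refine ⟨Gh, hval, hhold, ?_⟩
  intro z hz
  have key : Tendsto (fun w => dist (Gh w) (Gh z)) (𝓝[closedBall (0:ℂ) 1] z) (𝓝 0) := by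
    have hbnd : ∀ᶠ w in 𝓝[closedBall (0:ℂ) 1] z,
        dist (Gh w) (Gh z) ≤ C4 * dist w z ^ α := by
      apply eventually_nhdsWithin_of_forall
      intro w hw
      rw [dist_eq_norm, dist_eq_norm]
      exact hhold w hw z hz
    have h1 : Tendsto (fun w : ℂ => dist w z) (𝓝[closedBall (0:ℂ) 1] z) (𝓝 0) := by
      apply Tendsto.mono_left _ nhdsWithin_le_nhds
      have hcd : Continuous (fun w : ℂ => dist w z) :=
        continuous_id.dist continuous_const
      have := hcd.tendsto z
      simpa using this
    have h2 : Tendsto (fun x : ℝ => C4 * x ^ α) (𝓝 0) (𝓝 (C4 * (0:ℝ) ^ α)) := by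
      apply Tendsto.const_mul
      exact (Real.continuousAt_rpow_const 0 α (Or.inr hα0.le)).tendsto
    rw [Real.zero_rpow hα0.ne', mul_zero] at h2
    exact squeeze_zero' (Filter.Eventually.of_forall (fun w => dist_nonneg)) hbnd (h2.comp h1)
  exact tendsto_iff_dist_tendsto_zero.2 key

theorem stmt11 (α : ℝ) (hα0 : 0 < α) (hα1 : α < 1)
    (h g : ℂ → ℂ) (k : ℝ) (hk0 : 0 ≤ k) (hk1 : k < 1)
    (hh : DifferentiableOn ℂ h (ball (0:ℂ) 1))
    (hg : DifferentiableOn ℂ g (ball (0:ℂ) 1))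
    (hqr : ∀ z ∈ ball (0:ℂ) 1, ‖deriv g z‖ ≤ k * ‖deriv h z‖)
    (U : ℂ → ℝ) (A : ℝ) (hA : 0 < A)
    (hUcont : ContinuousOn U (closedBall (0:ℂ) 1))
    (hUeq : ∀ z ∈ ball (0:ℂ) 1, U z = (h z + (starRingEnd ℂ) (g z)).re)
    (hUHolder : ∀ s t : ℝ,
      |U (Complex.exp (s * Complex.I)) - U (Complex.exp (t * Complex.I))| ≤ A * |s - t| ^ α) :
    ∃ V : ℂ → ℝ, ∃ A' > 0,
      ContinuousOn V (closedBall (0:ℂ) 1) ∧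
      (∀ z ∈ ball (0:ℂ) 1, V z = (h z + (starRingEnd ℂ) (g z)).im) ∧
      (∀ s t : ℝ,
        |V (Complex.exp (s * Complex.I)) - V (Complex.exp (t * Complex.I))| ≤
          A' * |s - t| ^ α) := by
  have hπ := Real.pi_pos
  set F : ℂ → ℂ := fun z => h z + g z with hF
  set G : ℂ → ℂ := fun z => h z - g z with hG
  have hFd : DifferentiableOn ℂ F (ball (0:ℂ) 1) := hh.add hg
  have hGd : DifferentiableOn ℂ G (ball (0:ℂ) 1) := hh.sub hg
  have hreF : ∀ z ∈ ball (0:ℂ) 1, U z = (F z).re := by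
    intro z hz
    rw [hUeq z hz]
    simp [hF, Complex.add_re, Complex.conj_re]
  -- constants
  have hcospos : 0 < Real.cos (α * (π/2)) := by
    apply Real.cos_pos_of_mem_Ioo
    constructor <;> nlinarith
  set Cb : ℝ := A * (π/2) ^ α / Real.cos (α * (π/2)) with hCb
  have hCbpos : 0 < Cb := by
    apply div_pos _ hcospos
    positivity
  have hbar := barrier_est hα0 hα1 hA hFd hreF hUcont hUHolder
  have hbar' : ∀ t : ℝ, ∀ w ∈ closedBall (0:ℂ) 1,
      |U w - U (Complex.exp (t*I))| ≤ Cb * Complex.abs (Complex.exp (t*I) - w) ^ α := by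
    intro t w hw
    exact hbar t w hw
  have hosc := local_osc hα0 hα1 hCbpos hbar'
  have hgradF := grad_bound hα0 hα1 hCbpos hFd hreF hosc
  set C2 : ℝ := 4*(6*Cb+1) with hC2
  have hC2pos : 0 < C2 := by rw [hC2]; nlinarith
  set C3 : ℝ := ((1+k)/(1-k)) * C2 with hC3
  have hC3pos : 0 < C3 := by
    apply mul_pos _ hC2pos
    apply div_pos <;> linarith
  have hgradG : ∀ z ∈ ball (0:ℂ) 1, ‖deriv G z‖ ≤ C3 * (1 - Complex.abs z) ^ (α - 1) := by
    intro z hz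
    have hdh : DifferentiableAt ℂ h z := hh.differentiableAt (isOpen_ball.mem_nhds hz)
    have hdg : DifferentiableAt ℂ g z := hg.differentiableAt (isOpen_ball.mem_nhds hz)
    have hderivF : deriv F z = deriv h z + deriv g z := deriv_add hdh hdg
    have hderivG : deriv G z = deriv h z - deriv g z := deriv_sub hdh hdg
    have hq := hqr z hz
    rw [Complex.norm_eq_abs, Complex.norm_eq_abs] at hq
    have h1 : (1-k) * Complex.abs (deriv h z) ≤ ‖deriv F z‖ := by
      rw [hderivF]
      have h2 : ‖deriv h z‖ - ‖deriv g z‖ ≤ ‖deriv h z + deriv g z‖ := by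
        have := norm_sub_norm_le (deriv h z) (-(deriv g z))
        simpa using this
      rw [Complex.norm_eq_abs]
      rw [Complex.norm_eq_abs, Complex.norm_eq_abs, Complex.norm_eq_abs] at h2
      nlinarith
    have h3 : ‖deriv G z‖ ≤ (1+k) * Complex.abs (deriv h z) := by
      rw [hderivG, Complex.norm_eq_abs]
      have h4 : Complex.abs (deriv h z - deriv g z)
          ≤ Complex.abs (deriv h z) + Complex.abs (deriv g z) := by
        simpa using Complex.abs.sub_le_add (deriv h z) (deriv g z)
      nlinarith
    have hrpow : 0 < (1 - Complex.abs z) ^ (α - 1) := by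
      apply Real.rpow_pos_of_pos
      have habs : Complex.abs z < 1 := by
        rw [← Complex.norm_eq_abs]; exact mem_ball_zero_iff.1 hz
      linarith
    have h5 := hgradF z hz
    rw [hC3]
    rw [div_mul_eq_mul_div, div_mul_eq_mul_div, le_div_iff₀ (by linarith : (0:ℝ) < 1-k)]
    calc ‖deriv G z‖ * (1-k) ≤ (1+k) * Complex.abs (deriv h z) * (1-k) := by
          apply mul_le_mul_of_nonneg_right h3 (by linarith)
      _ = (1+k) * ((1-k) * Complex.abs (deriv h z)) := by ring
      _ ≤ (1+k) * ‖deriv F z‖ := by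
          apply mul_le_mul_of_nonneg_left h1 (by linarith)
      _ ≤ (1+k) * (C2 * (1 - Complex.abs z) ^ (α-1)) := by
          apply mul_le_mul_of_nonneg_left h5 (by linarith)
      _ = (1+k) * C2 * (1 - Complex.abs z) ^ (α-1) := by ring
  have hholder := holder_ball hα0 hα1 hC3pos.le hGd hgradG
  set C4 : ℝ := C3*(2/α + 1) with hC4
  have hC4pos : 0 < C4 := by
    rw [hC4]
    apply mul_pos hC3pos
    have : 0 < 2/α := by positivity
    linarith
  obtain ⟨Gh, hval, hhold, hcont⟩ := extend_holder hα0 hC4pos.le hGd.continuousOn hholder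
  refine ⟨fun z => (Gh z).im, C4, hC4pos, ?_, ?_, ?_⟩
  · exact Complex.continuous_im.comp_continuousOn hcont
  · intro z hz
    show (Gh z).im = (h z + (starRingEnd ℂ) (g z)).im
    rw [hval z hz]
    simp [hG, Complex.sub_im, Complex.add_im, Complex.conj_im]
    ring
  · intro s t
    have hmemS : ∀ u : ℝ, Complex.exp (u * I) ∈ closedBall (0:ℂ) 1 := by
      intro u
      rw [mem_closedBall_zero_iff, Complex.norm_eq_abs, Complex.abs_exp]
      simp
    have hexp_lip : ‖Complex.exp ((s:ℂ) * I) - Complex.exp ((t:ℂ) * I)‖ ≤ |s - t| := by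
      have hde : ∀ u : ℝ, HasDerivAt (fun v : ℝ => Complex.exp ((v:ℂ) * I))
          (Complex.exp ((u:ℂ)*I) * I) u := by
        intro u
        have hmul : HasDerivAt (fun w : ℂ => w*I) I (u:ℂ) := by
          simpa using (hasDerivAt_id ((u:ℂ))).mul_const I
        have hexp : HasDerivAt (fun w : ℂ => Complex.exp (w * I))
            (Complex.exp ((u:ℂ)*I) * I) (u:ℂ) := by
          exact (Complex.hasDerivAt_exp ((u:ℂ)*I)).comp (u:ℂ) hmul
        exact hexp.comp_ofReal
      have hmvt := Convex.norm_image_sub_le_of_norm_hasDerivWithin_le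
        (f := fun v : ℝ => Complex.exp ((v:ℂ) * I))
        (f' := fun u : ℝ => Complex.exp ((u:ℂ)*I) * I) (s := Set.univ) (C := 1)
        (fun u _ => (hde u).hasDerivWithinAt)
        (fun u _ => by
          rw [norm_mul, Complex.norm_eq_abs, Complex.norm_eq_abs, Complex.abs_exp, Complex.abs_I]
          simp)
        convex_univ (mem_univ t) (mem_univ s)
      calc ‖Complex.exp ((s:ℂ) * I) - Complex.exp ((t:ℂ) * I)‖ ≤ 1 * ‖s - t‖ := hmvt
        _ = |s - t| := by rw [one_mul, Real.norm_eq_abs]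
    calc |(Gh (Complex.exp ((s:ℂ) * I))).im - (Gh (Complex.exp ((t:ℂ) * I))).im|
        ≤ Complex.abs (Gh (Complex.exp ((s:ℂ) * I)) - Gh (Complex.exp ((t:ℂ) * I))) := by
          rw [show (Gh (Complex.exp ((s:ℂ) * I))).im - (Gh (Complex.exp ((t:ℂ) * I))).im
            = (Gh (Complex.exp ((s:ℂ) * I)) - Gh (Complex.exp ((t:ℂ) * I))).im by
              rw [Complex.sub_im]]
          exact Complex.abs_im_le_abs _
      _ ≤ C4 * ‖Complex.exp ((s:ℂ) * I) - Complex.exp ((t:ℂ) * I)‖ ^ α := by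
          exact_mod_cast hhold _ (hmemS s) _ (hmemS t)
      _ ≤ C4 * |s - t| ^ α := by
          apply mul_le_mul_of_nonneg_left _ hC4pos.le
          exact Real.rpow_le_rpow (norm_nonneg _) hexp_lip hα0.le
end
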